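/- arXiv:0708.3871 — 2 statements merged into one kernel-verified Lean document; each statement's English description precedes it below -/
import Mathlib

section
/- Let G be a locally compact NSS local group and 𝒰 a special neighborhood of G with 𝒰 ⊆ U₆. With the topology on L(G) generated by the subbasis B_{C,U}, the set 𝒦 is a compact neighborhood of O in L(G), and the map E : 𝒦 → K defined by E(𝕏) := 𝕏(1) is a bijection and a homeomorphism onto K. -/
set_option linter.unusedSectionVars false


open scoped Topology Manifold ENNReal

/-- A local group in the sense of Goldbring's "Hilbert's Fifth Problem for Local Groups":
a Hausdorff-intended topological space `G` with a distinguished element `one`, a partial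
inversion `inv` defined (i.e. meaningful) on the open set `Lambda`, and a partial product
`mul` meaningful on the open set `Omega`. -/
structure LocalGroup (G : Type*) [TopologicalSpace G] where
  one : G
  Lambda : Set G
  Omega : Set (G × G)
  inv : G → G
  mul : G → G → G
  isOpen_Lambda : IsOpen Lambda
  isOpen_Omega : IsOpen Omega
  one_mem_Lambda : one ∈ Lambda
  pair_one_left : ∀ x : G, (one, x) ∈ Omega
  pair_one_right : ∀ x : G, (x, one) ∈ Omega
  continuousOn_inv : ContinuousOn inv Lambda
  continuousOn_mul : ContinuousOn (fun q : G × G => mul q.1 q.2) Omega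
  one_mul : ∀ x : G, mul one x = x
  mul_one : ∀ x : G, mul x one = x
  mem_inv_right : ∀ x ∈ Lambda, (x, inv x) ∈ Omega
  mem_inv_left : ∀ x ∈ Lambda, (inv x, x) ∈ Omega
  mul_inv_self : ∀ x ∈ Lambda, mul x (inv x) = one
  inv_mul_self : ∀ x ∈ Lambda, mul (inv x) x = one
  assoc : ∀ x y z : G, (x, y) ∈ Omega → (y, z) ∈ Omega → (mul x y, z) ∈ Omega →
    (x, mul y z) ∈ Omega → mul (mul x y) z = mul x (mul y z)

namespace LocalGroup

variable {G : Type*} {G' : Type*} [TopologicalSpace G] [TopologicalSpace G']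

/-- The standing conventions of the paper: `Λ = G`, and whenever `(g,h) ∈ Ω` also
`(h⁻¹, g⁻¹) ∈ Ω` with `(gh)⁻¹ = h⁻¹g⁻¹`. -/
def Std (L : LocalGroup G) : Prop :=
  L.Lambda = Set.univ ∧
    ∀ g h : G, (g, h) ∈ L.Omega →
      (L.inv h, L.inv g) ∈ L.Omega ∧ L.inv (L.mul g h) = L.mul (L.inv h) (L.inv g)

/-- A symmetric subset: contained in the domain of inversion and stable under it. -/
def IsSymmetric (L : LocalGroup G) (S : Set G) : Prop :=
  S ⊆ L.Lambda ∧ L.inv '' S = S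

/-- A subgroup of a local group. -/
def IsSubgroup (L : LocalGroup G) (H : Set G) : Prop :=
  L.one ∈ H ∧ H ⊆ L.Lambda ∧ (∀ x ∈ H, ∀ y ∈ H, (x, y) ∈ L.Omega) ∧
    (∀ x ∈ H, L.inv x ∈ H) ∧ ∀ x ∈ H, ∀ y ∈ H, L.mul x y ∈ H

/-- No small subgroups. -/
def NSS (L : LocalGroup G) : Prop :=
  ∃ U ∈ 𝓝 L.one, ∀ H : Set G, L.IsSubgroup H → H ⊆ U → H = {L.one}

/-- No small connected subgroups. -/
def NSCS (L : LocalGroup G) : Prop :=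
  ∃ U ∈ 𝓝 L.one, ∀ H : Set G, L.IsSubgroup H → IsConnected H → H ⊆ U → H = {L.one}

/-- `(a₁, …, aₙ)` represents `b`: all ways of multiplying the list are defined and equal `b`.
By convention the empty list represents `one`. -/
def Represents (L : LocalGroup G) : List G → G → Prop
  | [], b => b = L.one
  | [a], b => b = a
  | a :: c :: l, b =>
      ∀ i : ℕ, 1 ≤ i → i < (a :: c :: l).length →
        ∃ b₁ b₂ : G, L.Represents ((a :: c :: l).take i) b₁ ∧
          L.Represents ((a :: c :: l).drop i) b₂ ∧ (b₁, b₂) ∈ L.Omega ∧ L.mul b₁ b₂ = b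
termination_by l => l.length
decreasing_by
  all_goals simp only [List.length_cons, List.length_take, List.length_drop] at *
  all_goals omega

/-- `A^n`: all products of `n` elements of `A` (only meaningful when such products are defined). -/
def setPow (L : LocalGroup G) (A : Set G) (n : ℕ) : Set G :=
  {b | ∃ l : List G, l.length = n ∧ (∀ a ∈ l, a ∈ A) ∧ L.Represents l b}

/-- A chain `U₁ ⊇ U₂ ⊇ ⋯` of symmetric open neighborhoods of `1` such that products of `n`
elements of `Uₙ` are defined (the sets `𝒰ₙ` of the paper). -/
def IsProdChain (L : LocalGroup G) (U : ℕ → Set G) : Prop :=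
  ∀ n : ℕ, 1 ≤ n →
    IsOpen (U n) ∧ L.one ∈ U n ∧ L.IsSymmetric (U n) ∧ U (n + 1) ⊆ U n ∧
      ∀ l : List G, l.length = n → (∀ a ∈ l, a ∈ U n) → ∃ b, L.Represents l b

/-- `a^k` is defined and equal to `b`, for `k : ℤ` (with `a^(-n) := (a⁻¹)^n`). -/
def zpowRep (L : LocalGroup G) (a : G) : ℤ → G → Prop
  | Int.ofNat n, b => L.Represents (List.replicate n a) b
  | Int.negSucc n, b => L.Represents (List.replicate (n + 1) (L.inv a)) b

/-- A special neighborhood (relative to a product chain `U`): a compact symmetric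
neighborhood of `1` contained in `U 2`, containing no nontrivial subgroup, on which
squaring is injective. -/
def IsSpecialNbhd (L : LocalGroup G) (U : ℕ → Set G) (SU : Set G) : Prop :=
  IsCompact SU ∧ SU ∈ 𝓝 L.one ∧ L.IsSymmetric SU ∧ SU ⊆ U 2 ∧
    (∀ H : Set G, L.IsSubgroup H → H ⊆ SU → H = {L.one}) ∧
    ∀ x ∈ SU, ∀ y ∈ SU, L.mul x x = L.mul y y → x = y

/-- `Λ_U` for the restriction `G|U`. -/
def restLambda (L : LocalGroup G) (U : Set G) : Set G := L.Lambda ∩ U ∩ L.inv ⁻¹' U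

/-- `Ω_U` for the restriction `G|U`. -/
def restOmega (L : LocalGroup G) (U : Set G) : Set (G × G) :=
  {q | q ∈ L.Omega ∧ q.1 ∈ U ∧ q.2 ∈ U ∧ L.mul q.1 q.2 ∈ U}

/-- A morphism of local groups `L → L'`. -/
def IsMorphism (L : LocalGroup G) (L' : LocalGroup G') (f : G → G') : Prop :=
  Continuous f ∧ f L.one = L'.one ∧
    (∀ x ∈ L.Lambda, f x ∈ L'.Lambda ∧ f (L.inv x) = L'.inv (f x)) ∧
    ∀ x y : G, (x, y) ∈ L.Omega → ((f x, f y) ∈ L'.Omega ∧ f (L.mul x y) = L'.mul (f x) (f y))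

/-- `f` is a morphism of local groups `G|U → G'|U'` between restrictions. -/
def IsRestMorphism (L : LocalGroup G) (L' : LocalGroup G') (U : Set G) (U' : Set G')
    (f : G → G') : Prop :=
  ContinuousOn f U ∧ Set.MapsTo f U U' ∧ f L.one = L'.one ∧
    (∀ x ∈ L.restLambda U, f x ∈ L'.restLambda U' ∧ f (L.inv x) = L'.inv (f x)) ∧
    ∀ x y : G, (x, y) ∈ L.restOmega U →
      ((f x, f y) ∈ L'.restOmega U' ∧ f (L.mul x y) = L'.mul (f x) (f y))

/-- Local isomorphism: a homeomorphism between open neighborhoods of the identities which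
is a morphism of restrictions in both directions. -/
def LocallyIsomorphic (L : LocalGroup G) (L' : LocalGroup G') : Prop :=
  ∃ (U : Set G) (U' : Set G') (f : G → G') (g : G' → G),
    IsOpen U ∧ L.one ∈ U ∧ IsOpen U' ∧ L'.one ∈ U' ∧
      Set.BijOn f U U' ∧ (∀ x ∈ U, g (f x) = x) ∧ (∀ y ∈ U', f (g y) = y) ∧
      L.IsRestMorphism L' U U' f ∧ L'.IsRestMorphism L U' U g

/-- A topological group regarded as a local group with `Λ = G` and `Ω = G × G`. -/
def ofGroup (H : Type*) [TopologicalSpace H] [Group H] [IsTopologicalGroup H] : LocalGroup H where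
  one := 1
  Lambda := Set.univ
  Omega := Set.univ
  inv := fun x => x⁻¹
  mul := fun x y => x * y
  isOpen_Lambda := isOpen_univ
  isOpen_Omega := isOpen_univ
  one_mem_Lambda := trivial
  pair_one_left := fun _ => trivial
  pair_one_right := fun _ => trivial
  continuousOn_inv := continuous_inv.continuousOn
  continuousOn_mul := (continuous_fst.mul continuous_snd).continuousOn
  one_mul := fun x => _root_.one_mul x
  mul_one := fun x => _root_.mul_one x
  mem_inv_right := fun _ _ => trivial
  mem_inv_left := fun _ _ => trivial
  mul_inv_self := fun x _ => mul_inv_cancel x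
  inv_mul_self := fun x _ => inv_mul_cancel x
  assoc := fun x y z _ _ _ _ => mul_assoc x y z

/-- A bundled (finite-dimensional, real) Lie group in the Mathlib sense. -/
structure BundledLieGroup : Type 1 where
  n : ℕ
  carrier : Type
  [ts : TopologicalSpace carrier]
  [t2 : T2Space carrier]
  [grp : Group carrier]
  [tg : IsTopologicalGroup carrier]
  [cs : ChartedSpace (EuclideanSpace ℝ (Fin n)) carrier]
  [lie : LieGroup (𝓡 n) (⊤ : ℕ∞) carrier]

/-- `L` is locally isomorphic to (the local group underlying) a Lie group. -/
def IsLieLocallyIsomorphic (L : LocalGroup G) : Prop :=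
  ∃ B : BundledLieGroup,
    letI := B.ts; letI := B.grp; letI := B.tg
    L.LocallyIsomorphic (ofGroup B.carrier)

/-- A local one-parameter subgroup of `L`, with domain `(-r, r)` (where `r ∈ (0,∞]`). -/
structure LocalOnePS (L : LocalGroup G) where
  r : ℝ≥0∞
  r_pos : 0 < r
  toFun : ℝ → G
  mem_Lambda : ∀ t : ℝ, ENNReal.ofReal |t| < r → toFun t ∈ L.Lambda
  continuousOn : ContinuousOn toFun {t : ℝ | ENNReal.ofReal |t| < r}
  add : ∀ s t : ℝ, ENNReal.ofReal |s| < r → ENNReal.ofReal |t| < r →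
    ENNReal.ofReal |s + t| < r →
      (toFun s, toFun t) ∈ L.Omega ∧ toFun (s + t) = L.mul (toFun s) (toFun t)

variable {L : LocalGroup G}

/-- Equivalence (equality of germs at 0) of local one-parameter subgroups. -/
def OnePSEquiv (X Y : LocalOnePS L) : Prop :=
  ∃ s : ℝ, 0 < s ∧ ENNReal.ofReal s < X.r ∧ ENNReal.ofReal s < Y.r ∧
    ∀ t : ℝ, |t| < s → X.toFun t = Y.toFun t

theorem onePS_exists_small (X : LocalOnePS L) : ∃ s : ℝ, 0 < s ∧ ENNReal.ofReal s < X.r := by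
  rcases eq_or_ne X.r ⊤ with h | h
  · exact ⟨1, one_pos, by simp [h]⟩
  · have h0 : X.r ≠ 0 := ne_of_gt X.r_pos
    have htr : 0 < X.r.toReal := ENNReal.toReal_pos h0 h
    refine ⟨X.r.toReal / 2, by linarith, ?_⟩
    rw [ENNReal.ofReal_lt_iff_lt_toReal (by linarith) h]
    linarith

instance onePSSetoid (L : LocalGroup G) : Setoid (LocalOnePS L) where
  r := OnePSEquiv
  iseqv := by
    constructor
    · intro X
      obtain ⟨s, hs, hsr⟩ := onePS_exists_small X
      exact ⟨s, hs, hsr, hsr, fun _ _ => rfl⟩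
    · rintro X Y ⟨s, hs, h1, h2, h3⟩
      exact ⟨s, hs, h2, h1, fun t ht => (h3 t ht).symm⟩
    · rintro X Y Z ⟨s1, hs1, hX1, hY1, hag1⟩ ⟨s2, hs2, hY2, hZ2, hag2⟩
      refine ⟨min s1 s2, lt_min hs1 hs2, ?_, ?_, fun t ht => ?_⟩
      · exact lt_of_le_of_lt (ENNReal.ofReal_le_ofReal (min_le_left _ _)) hX1
      · exact lt_of_le_of_lt (ENNReal.ofReal_le_ofReal (min_le_right _ _)) hZ2
      · rw [hag1 t (lt_of_lt_of_le ht (min_le_left _ _)),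
          hag2 t (lt_of_lt_of_le ht (min_le_right _ _))]

/-- `L(G)`: the set of germs at `0` of local one-parameter subgroups of `L`. -/
abbrev LGQuot (L : LocalGroup G) := Quotient (onePSSetoid L)

/-- The trivial local one-parameter subgroup `O`. -/
noncomputable def constOnePS (L : LocalGroup G) : LocalOnePS L where
  r := ⊤
  r_pos := by simp
  toFun := fun _ => L.one
  mem_Lambda := fun _ _ => L.one_mem_Lambda
  continuousOn := continuousOn_const
  add := fun s t _ _ _ => ⟨L.pair_one_left L.one, (L.one_mul L.one).symm⟩

/-- The domain of a germ of local one-parameter subgroups: the union of the domains of its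
representatives. -/
def germDomain (L : LocalGroup G) (X : LGQuot L) : Set ℝ :=
  {t | ∃ Y : LocalOnePS L, ⟦Y⟧ = X ∧ ENNReal.ofReal |t| < Y.r}

/-- Evaluation of a germ at a point of its domain (junk value outside). This is
well defined, i.e. independent of the choice of representative, by the basic theory
of local one-parameter subgroups. -/
noncomputable def germEval (L : LocalGroup G) (X : LGQuot L) (t : ℝ) : G := by
  classical exact if h : ∃ Y : LocalOnePS L, ⟦Y⟧ = X ∧ ENNReal.ofReal |t| < Y.r then h.choose.toFun t
  else L.one

/-- The topology on `L(G)` generated by the subbasic sets `B_{C,U}` for `C ⊆ (-2,2)`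
compact and `U ⊆ G` open. -/
instance germTopology (L : LocalGroup G) : TopologicalSpace (LGQuot L) :=
  TopologicalSpace.generateFrom
    {S | ∃ (C : Set ℝ) (U : Set G), IsCompact C ∧ C ⊆ Set.Ioo (-2 : ℝ) 2 ∧ IsOpen U ∧
      S = {X : LGQuot L | C ⊆ germDomain L X ∧ ∀ t ∈ C, germEval L X t ∈ U}}

/-- A sublocal group `H` of `L`, with associated neighborhood `V`. -/
def IsSublocalGroup (L : LocalGroup G) (H V : Set G) : Prop :=
  L.one ∈ H ∧ IsOpen V ∧ L.one ∈ V ∧ H ⊆ V ∧ (∀ x ∈ closure H, x ∈ V → x ∈ H) ∧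
    (∀ x ∈ H, x ∈ L.Lambda → L.inv x ∈ V → L.inv x ∈ H) ∧
    ∀ x ∈ H, ∀ y ∈ H, (x, y) ∈ L.Omega → L.mul x y ∈ V → L.mul x y ∈ H

/-- A normal sublocal group `H` of `L`, with normalizing neighborhood `V`. -/
def IsNormalSublocalGroup (L : LocalGroup G) (H V : Set G) : Prop :=
  L.IsSublocalGroup H V ∧ L.IsSymmetric V ∧
    ∀ y ∈ V, ∀ x ∈ H, ∀ b : G, L.Represents [y, x, L.inv y] b → b ∈ V → b ∈ H

/-- The coset relation `E_H` on `W`. -/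
def quotRel (L : LocalGroup G) (H W : Set G) : ↥W → ↥W → Prop :=
  fun x y => L.mul (L.inv ↑x) ↑y ∈ H

/-- The local coset space `W/E_H`, with the quotient topology. -/
abbrev QuotCarrier (L : LocalGroup G) (H W : Set G) := Quot (L.quotRel H W)

/-- `Q` is the local quotient group structure `(G/H)_W` on `W/E_H`. -/
def IsQuotStructure (L : LocalGroup G) (H W : Set G) (h1W : L.one ∈ W)
    (Q : LocalGroup (L.QuotCarrier H W)) : Prop :=
  Q.one = Quot.mk (L.quotRel H W) ⟨L.one, h1W⟩ ∧
    Q.Lambda = Set.univ ∧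
    (∀ (x : ↥W) (hx : L.inv ↑x ∈ W),
      Q.inv (Quot.mk (L.quotRel H W) x) = Quot.mk (L.quotRel H W) ⟨L.inv ↑x, hx⟩) ∧
    Q.Omega = {q | ∃ x y : ↥W, ((x : G), (y : G)) ∈ L.Omega ∧ L.mul ↑x ↑y ∈ W ∧
      q = (Quot.mk (L.quotRel H W) x, Quot.mk (L.quotRel H W) y)} ∧
    ∀ (x y : ↥W) (_ : ((x : G), (y : G)) ∈ L.Omega) (hm : L.mul ↑x ↑y ∈ W),
      Q.mul (Quot.mk (L.quotRel H W) x) (Quot.mk (L.quotRel H W) y) =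
        Quot.mk (L.quotRel H W) ⟨L.mul ↑x ↑y, hm⟩

/-- The sup-norm of a real-valued function. -/
noncomputable def supNorm (f : G → ℝ) : ℝ := ⨆ x : G, |f x|

/-- `W²` = the set of products of two elements of `W`. -/
def sqSet (L : LocalGroup G) (W : Set G) : Set G :=
  {z | ∃ a ∈ W, ∃ b ∈ W, (a, b) ∈ L.Omega ∧ L.mul a b = z}

/-- The (left-translation) action `a · f` of `a` on functions supported in `W`:
`(a·f)(x) = f (a⁻¹ x)` for `x ∈ W²` and `0` otherwise. -/
noncomputable def act (L : LocalGroup G) (W : Set G) (a : G) (f : G → ℝ) : G → ℝ := by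
  classical exact fun x => if x ∈ L.sqSet W then f (L.mul (L.inv a) x) else 0

/-- `ord(x) ≥ n` relative to the special neighborhood `SU`: all powers `x^k`, `|k| ≤ n`,
are defined and lie in `SU`. -/
def ordGE (L : LocalGroup G) (SU : Set G) (n : ℕ) : Set G :=
  {x | ∀ k : ℤ, k.natAbs ≤ n → ∃ b : G, L.zpowRep x k b ∧ b ∈ SU}

end LocalGroup

open LocalGroup
section Test
variable {G : Type*} [TopologicalSpace G] {L : LocalGroup G}

theorem rep_single {a b : G} (h : L.Represents [a] b) : b = a := by
  rw [LocalGroup.Represents] at h; exact h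

theorem rep_single' (a : G) : L.Represents [a] a := by
  rw [LocalGroup.Represents]

theorem rep_pair {a c b : G} (h : L.Represents [a, c] b) :
    (a, c) ∈ L.Omega ∧ b = L.mul a c := by
  rw [LocalGroup.Represents] at h
  obtain ⟨b₁, b₂, h1, h2, hΩ, hm⟩ := h 1 le_rfl (by norm_num)
  simp only [List.take, List.drop] at h1 h2
  rw [LocalGroup.Represents] at h1 h2
  subst h1; subst h2
  exact ⟨hΩ, hm.symm⟩

end Test
section Test
variable {G : Type*} [TopologicalSpace G] {L : LocalGroup G} (hstd : L.Std)

include hstd in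
theorem lam_univ (x : G) : x ∈ L.Lambda := by rw [hstd.1]; trivial

include hstd in
theorem inv_cont : Continuous L.inv := by
  have h := L.continuousOn_inv
  rw [hstd.1] at h
  exact continuousOn_univ.mp h

include hstd in
theorem inv_eq_of_mul {x y : G} (hΩ : (x, y) ∈ L.Omega) (hm : L.mul x y = L.one) :
    L.inv x = y := by
  have h1 : (L.inv x, x) ∈ L.Omega := L.mem_inv_left x (lam_univ hstd x)
  have h3 : (L.mul (L.inv x) x, y) ∈ L.Omega := by
    rw [L.inv_mul_self x (lam_univ hstd x)]; exact L.pair_one_left y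
  have h4 : (L.inv x, L.mul x y) ∈ L.Omega := by
    rw [hm]; exact L.pair_one_right _
  have := L.assoc (L.inv x) x y h1 hΩ h3 h4
  rw [L.inv_mul_self x (lam_univ hstd x), L.one_mul, hm, L.mul_one] at this
  exact this.symm

include hstd in
theorem inv_inv' (x : G) : L.inv (L.inv x) = x :=
  inv_eq_of_mul hstd (L.mem_inv_left x (lam_univ hstd x)) (L.inv_mul_self x (lam_univ hstd x))

include hstd in
theorem eq_one_of_idem {x : G} (hΩ : (x, x) ∈ L.Omega) (hm : L.mul x x = x) : x = L.one := by
  have h1 : (L.inv x, x) ∈ L.Omega := L.mem_inv_left x (lam_univ hstd x)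
  have h3 : (L.mul (L.inv x) x, x) ∈ L.Omega := by
    rw [L.inv_mul_self x (lam_univ hstd x)]; exact L.pair_one_left x
  have h4 : (L.inv x, L.mul x x) ∈ L.Omega := by rw [hm]; exact h1
  have := L.assoc (L.inv x) x x h1 hΩ h3 h4
  rw [L.inv_mul_self x (lam_univ hstd x), L.one_mul, hm] at this
  rw [this, L.inv_mul_self x (lam_univ hstd x)]

end Test
section Test2
variable {G : Type*} [TopologicalSpace G] {L : LocalGroup G} {Un : ℕ → Set G} {SU : Set G}
variable (hstd : L.Std) (hUn : L.IsProdChain Un) (hSU : L.IsSpecialNbhd Un SU)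
  (hSU6 : SU ⊆ Un 6)

theorem one_mem_SU (hSU : L.IsSpecialNbhd Un SU) : L.one ∈ SU := mem_of_mem_nhds hSU.2.1

theorem inv_mem_SU (hSU : L.IsSpecialNbhd Un SU) {x : G} (hx : x ∈ SU) : L.inv x ∈ SU := by
  have := hSU.2.2.1.2
  rw [← this]
  exact Set.mem_image_of_mem _ hx

include hUn hSU6 in
theorem SU_sub4 : SU ⊆ Un 4 := by
  have h5 := (hUn 5 (by norm_num)).2.2.2.1
  have h4 := (hUn 4 (by norm_num)).2.2.2.1
  exact fun x hx => h4 (h5 (hSU6 hx))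

include hUn hSU hSU6 in
theorem pair_SU {a b : G} (ha : a ∈ SU) (hb : b ∈ SU) : (a, b) ∈ L.Omega := by
  obtain ⟨c, hc⟩ := (hUn 2 (by norm_num)).2.2.2.2 [a, b] rfl (by
    intro x hx
    have h2 := hSU.2.2.2.1
    rw [List.mem_cons, List.mem_singleton] at hx
    rcases hx with h | h <;> subst h
    exacts [h2 ha, h2 hb])
  exact (rep_pair hc).1

theorem rep_triple {x y z b : G} (h : L.Represents [x, y, z] b) :
    (x, y) ∈ L.Omega ∧ (y, z) ∈ L.Omega ∧ (L.mul x y, z) ∈ L.Omega ∧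
      (x, L.mul y z) ∈ L.Omega ∧ b = L.mul x (L.mul y z) ∧ b = L.mul (L.mul x y) z := by
  rw [LocalGroup.Represents] at h
  obtain ⟨b₁, b₂, h1, h2, hΩ1, hm1⟩ := h 1 le_rfl (by norm_num)
  obtain ⟨c₁, c₂, h3, h4, hΩ2, hm2⟩ := h 2 (by norm_num) (by norm_num)
  simp only [List.take, List.drop] at h1 h2 h3 h4
  have e1 := rep_single h1
  have e2 := rep_pair h2
  have e3 := rep_pair h3
  have e4 := rep_single h4
  subst e1; subst e4
  rw [e2.2] at hΩ1 hm1
  rw [e3.2] at hΩ2 hm2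
  exact ⟨e3.1, e2.1, hΩ2, hΩ1, hm1.symm, hm2.symm⟩

theorem rep_quad {w x y z b : G} (h : L.Represents [w, x, y, z] b) :
    ∃ u, L.Represents [w, x, y] u ∧ (u, z) ∈ L.Omega ∧ b = L.mul u z ∧
      (L.mul w x, L.mul y z) ∈ L.Omega ∧ b = L.mul (L.mul w x) (L.mul y z) := by
  rw [LocalGroup.Represents] at h
  obtain ⟨b₁, b₂, h1, h2, hΩ1, hm1⟩ := h 3 (by norm_num) (by norm_num)
  obtain ⟨c₁, c₂, h3, h4, hΩ2, hm2⟩ := h 2 (by norm_num) (by norm_num)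
  simp only [List.take, List.drop] at h1 h2 h3 h4
  have e2 := rep_single h2
  have e3 := rep_pair h3
  have e4 := rep_pair h4
  subst e2
  rw [e3.2] at hΩ2 hm2
  rw [e4.2] at hΩ2 hm2
  exact ⟨b₁, h1, hΩ1, hm1.symm, hΩ2, hm2.symm⟩

include hstd hUn hSU hSU6 in
theorem quad_lemma {a b : G} (ha : a ∈ SU) (hb : b ∈ SU) (hcomm : L.mul a b = L.mul b a) :
    (L.mul a a, L.mul b b) ∈ L.Omega ∧
      L.mul (L.mul a a) (L.mul b b) = L.mul (L.mul a b) (L.mul a b) := by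
  have hmem : ∀ c ∈ SU, c ∈ Un 4 := fun c hc => SU_sub4 hUn hSU6 hc
  obtain ⟨P, hP⟩ := (hUn 4 (by norm_num)).2.2.2.2 [a, a, b, b] rfl (by
    intro c hc
    have hab : c = a ∨ c = b := by simp at hc; tauto
    rcases hab with rfl|rfl
    exacts [hmem _ ha, hmem _ hb])
  obtain ⟨Q, hQ⟩ := (hUn 4 (by norm_num)).2.2.2.2 [a, b, a, b] rfl (by
    intro c hc
    have hab : c = a ∨ c = b := by simp at hc; tauto
    rcases hab with rfl|rfl
    exacts [hmem _ ha, hmem _ hb])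
  obtain ⟨u, hu, huz, hPu, hΩP, hPval⟩ := rep_quad hP
  obtain ⟨v, hv, hvz, hQv, hΩQ, hQval⟩ := rep_quad hQ
  have hu3 := rep_triple hu
  have hv3 := rep_triple hv
  -- u = a(ab), v = a(ba) = a(ab) = u
  have huval : u = L.mul a (L.mul a b) := hu3.2.2.2.2.1
  have hvval : v = L.mul a (L.mul a b) := by rw [hv3.2.2.2.2.1, ← hcomm]
  have hPQ : P = Q := by rw [hPu, hQv, huval, hvval]
  refine ⟨hΩP, ?_⟩
  rw [hPval.symm.trans (hPQ.trans hQval)]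
end Test2
/-- `x^j` as iterated product. -/
def pchain {G : Type*} [TopologicalSpace G] (L : LocalGroup G) (x : G) : ℕ → G
  | 0 => L.one
  | j + 1 => L.mul (pchain L x j) x

section Test3
variable {G : Type*} [TopologicalSpace G] {L : LocalGroup G} {Un : ℕ → Set G} {SU : Set G}
variable (hstd : L.Std) (hUn : L.IsProdChain Un) (hSU : L.IsSpecialNbhd Un SU)
  (hSU6 : SU ⊆ Un 6)

theorem pchain_one (x : G) : pchain L x 1 = x := by
  show L.mul (pchain L x 0) x = x
  show L.mul L.one x = x
  exact L.one_mul x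

section PC
variable {x : G} (HX : ∀ j, pchain L x j ∈ SU ∧ pchain L (L.inv x) j ∈ SU)

include hstd hUn hSU hSU6 HX

omit hstd hUn hSU6 in
theorem x_mem_SU : x ∈ SU := by have := (HX 1).1; rwa [pchain_one] at this

theorem pchain_add (i j : ℕ) :
    L.mul (pchain L x i) (pchain L x j) = pchain L x (i + j) := by
  induction j with
  | zero => exact L.mul_one _
  | succ j ih =>
    have hx : x ∈ SU := x_mem_SU hSU HX
    have h := L.assoc (pchain L x i) (pchain L x j) x
      (pair_SU hUn hSU hSU6 (HX i).1 (HX j).1)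
      (pair_SU hUn hSU hSU6 (HX j).1 hx)
      (by rw [ih]; exact pair_SU hUn hSU hSU6 (HX (i+j)).1 hx)
      (pair_SU hUn hSU hSU6 (HX i).1 (HX (j+1)).1)
    show L.mul (pchain L x i) (L.mul (pchain L x j) x) = pchain L x (i + (j+1))
    rw [← h, ih]
    rfl

theorem pchain_mul_inv (i : ℕ) :
    L.mul (pchain L x (i + 1)) (L.inv x) = pchain L x i := by
  have hx : x ∈ SU := x_mem_SU hSU HX
  have hxi : L.inv x ∈ SU := inv_mem_SU hSU hx
  have h := L.assoc (pchain L x i) x (L.inv x)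
    (pair_SU hUn hSU hSU6 (HX i).1 hx)
    (L.mem_inv_right x (lam_univ hstd x))
    (pair_SU hUn hSU hSU6 (HX (i+1)).1 hxi)
    (by rw [L.mul_inv_self x (lam_univ hstd x)]; exact L.pair_one_right _)
  show L.mul (L.mul (pchain L x i) x) (L.inv x) = pchain L x i
  rw [h, L.mul_inv_self x (lam_univ hstd x), L.mul_one]

theorem x_cancel (j : ℕ) :
    L.mul x (pchain L (L.inv x) (j + 1)) = pchain L (L.inv x) j := by
  have hx : x ∈ SU := x_mem_SU hSU HX
  have hxi : L.inv x ∈ SU := inv_mem_SU hSU hx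
  induction j with
  | zero =>
    show L.mul x (pchain L (L.inv x) 1) = L.one
    rw [pchain_one]
    exact L.mul_inv_self x (lam_univ hstd x)
  | succ j ih =>
    have h := L.assoc x (pchain L (L.inv x) (j+1)) (L.inv x)
      (pair_SU hUn hSU hSU6 hx (HX (j+1)).2)
      (pair_SU hUn hSU hSU6 (HX (j+1)).2 hxi)
      (by rw [ih]; exact pair_SU hUn hSU hSU6 (HX j).2 hxi)
      (pair_SU hUn hSU hSU6 hx (HX (j+2)).2)
    show L.mul x (L.mul (pchain L (L.inv x) (j+1)) (L.inv x)) = pchain L (L.inv x) (j+1)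
    rw [← h, ih]
    rfl

theorem inv_pchain (j : ℕ) : L.inv (pchain L x j) = pchain L (L.inv x) j := by
  have hx : x ∈ SU := x_mem_SU hSU HX
  apply inv_eq_of_mul hstd (pair_SU hUn hSU hSU6 (HX j).1 (HX j).2)
  induction j with
  | zero => exact L.one_mul _
  | succ j ih =>
    have h := L.assoc (pchain L x j) x (pchain L (L.inv x) (j+1))
      (pair_SU hUn hSU hSU6 (HX j).1 hx)
      (pair_SU hUn hSU hSU6 hx (HX (j+1)).2)
      (pair_SU hUn hSU hSU6 (HX (j+1)).1 (HX (j+1)).2)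
      (by rw [x_cancel hstd hUn hSU hSU6 HX j]; exact pair_SU hUn hSU hSU6 (HX j).1 (HX j).2)
    show L.mul (L.mul (pchain L x j) x) (pchain L (L.inv x) (j+1)) = L.one
    rw [h, x_cancel hstd hUn hSU hSU6 HX j, ih]

theorem pchain_mixed1 : ∀ j i : ℕ, j ≤ i →
    L.mul (pchain L x i) (pchain L (L.inv x) j) = pchain L x (i - j) := by
  have hx : x ∈ SU := x_mem_SU hSU HX
  have hxi : L.inv x ∈ SU := inv_mem_SU hSU hx
  intro j
  induction j with
  | zero => intro i _; exact L.mul_one _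
  | succ j ih =>
    intro i hij
    obtain ⟨i', rfl⟩ : ∃ i', i = i' + 1 := ⟨i - 1, by omega⟩
    have hleft : L.mul (L.inv x) (pchain L (L.inv x) j) = pchain L (L.inv x) (j + 1) := by
      have := pchain_add hstd hUn hSU hSU6 (x := L.inv x) (fun k => ⟨(HX k).2, by
        rw [inv_inv' hstd]; exact (HX k).1⟩) 1 j
      rwa [pchain_one, Nat.add_comm] at this
    have h := L.assoc (pchain L x (i'+1)) (L.inv x) (pchain L (L.inv x) j)
      (pair_SU hUn hSU hSU6 (HX (i'+1)).1 hxi)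
      (pair_SU hUn hSU hSU6 hxi (HX j).2)
      (by rw [pchain_mul_inv hstd hUn hSU hSU6 HX i']; exact pair_SU hUn hSU hSU6 (HX i').1 (HX j).2)
      (by rw [hleft]; exact pair_SU hUn hSU hSU6 (HX (i'+1)).1 (HX (j+1)).2)
    rw [← hleft, ← h, pchain_mul_inv hstd hUn hSU hSU6 HX i', ih i' (by omega)]
    congr 1
    omega

theorem pchain_mixed2 : ∀ i j : ℕ, i ≤ j →
    L.mul (pchain L x i) (pchain L (L.inv x) j) = pchain L (L.inv x) (j - i) := by
  have hx : x ∈ SU := x_mem_SU hSU HX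
  intro i
  induction i with
  | zero => intro j _; exact L.one_mul _
  | succ i ih =>
    intro j hij
    obtain ⟨j', rfl⟩ : ∃ j', j = j' + 1 := ⟨j - 1, by omega⟩
    have h := L.assoc (pchain L x i) x (pchain L (L.inv x) (j'+1))
      (pair_SU hUn hSU hSU6 (HX i).1 hx)
      (pair_SU hUn hSU hSU6 hx (HX (j'+1)).2)
      (pair_SU hUn hSU hSU6 (HX (i+1)).1 (HX (j'+1)).2)
      (by rw [x_cancel hstd hUn hSU hSU6 HX j']; exact pair_SU hUn hSU hSU6 (HX i).1 (HX j').2)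
    show L.mul (L.mul (pchain L x i) x) (pchain L (L.inv x) (j'+1)) = _
    rw [h, x_cancel hstd hUn hSU hSU6 HX j', ih j' (by omega)]
    congr 1
    omega

end PC
end Test3
section Test4
variable {G : Type*} [TopologicalSpace G] [T2Space G] {L : LocalGroup G}
  {Un : ℕ → Set G} {SU : Set G}
variable (hstd : L.Std) (hUn : L.IsProdChain Un) (hSU : L.IsSpecialNbhd Un SU)
  (hSU6 : SU ⊆ Un 6)

include hstd hUn hSU hSU6 in
/-- If all powers of `x` (and of `x⁻¹`) lie in `SU`, then `x = 1`. -/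
theorem eq_one_of_powers {x : G}
    (HX : ∀ j, pchain L x j ∈ SU ∧ pchain L (L.inv x) j ∈ SU) : x = L.one := by
  classical
  set Z : Set G := {y | ∃ j, y = pchain L x j ∨ y = pchain L (L.inv x) j} with hZ
  have hZSU : Z ⊆ SU := by
    rintro y ⟨j, h | h⟩
    · rw [h]; exact (HX j).1
    · rw [h]; exact (HX j).2
  have hCSU : closure Z ⊆ SU := closure_minimal hZSU hSU.1.isClosed
  have HXinv : ∀ j, pchain L (L.inv x) j ∈ SU ∧ pchain L (L.inv (L.inv x)) j ∈ SU := by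
    intro j
    refine ⟨(HX j).2, ?_⟩
    rw [inv_inv' hstd]
    exact (HX j).1
  -- multiplication is closed on the orbit
  have hmulZ : ∀ u ∈ Z, ∀ v ∈ Z, L.mul u v ∈ Z := by
    rintro u ⟨i, hu | hu⟩ v ⟨j, hv | hv⟩ <;> subst hu <;> subst hv
    · exact ⟨i + j, Or.inl (pchain_add hstd hUn hSU hSU6 HX i j)⟩
    · rcases le_total j i with h | h
      · exact ⟨i - j, Or.inl (pchain_mixed1 hstd hUn hSU hSU6 HX j i h)⟩
      · exact ⟨j - i, Or.inr (pchain_mixed2 hstd hUn hSU hSU6 HX i j h)⟩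
    · rcases le_total j i with h | h
      · refine ⟨i - j, Or.inr ?_⟩
        have := pchain_mixed1 hstd hUn hSU hSU6 HXinv j i h
        rwa [inv_inv' hstd] at this
      · refine ⟨j - i, Or.inl ?_⟩
        have := pchain_mixed2 hstd hUn hSU hSU6 HXinv i j h
        rwa [inv_inv' hstd] at this
    · exact ⟨i + j, Or.inr (pchain_add hstd hUn hSU hSU6 HXinv i j)⟩
  have hinvZ : ∀ u ∈ Z, L.inv u ∈ Z := by
    rintro u ⟨j, hu | hu⟩ <;> subst hu
    · exact ⟨j, Or.inr (inv_pchain hstd hUn hSU hSU6 HX j)⟩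
    · refine ⟨j, Or.inl ?_⟩
      have := inv_pchain hstd hUn hSU hSU6 HXinv j
      rwa [inv_inv' hstd] at this
  have hsub : L.IsSubgroup (closure Z) := by
    refine ⟨subset_closure ⟨0, Or.inl rfl⟩, ?_, ?_, ?_, ?_⟩
    · intro y _; exact lam_univ hstd y
    · intro u hu v hv
      exact pair_SU hUn hSU hSU6 (hCSU hu) (hCSU hv)
    · intro u hu
      have h1 : L.inv u ∈ L.inv '' closure Z := Set.mem_image_of_mem _ hu
      have h2 : L.inv '' closure Z ⊆ closure (L.inv '' Z) :=
        image_closure_subset_closure_image (inv_cont hstd)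
      refine closure_mono ?_ (h2 h1)
      rintro y ⟨z, hz, rfl⟩
      exact hinvZ z hz
    · intro u hu v hv
      have hconts : ContinuousOn (fun q : G × G => L.mul q.1 q.2) (closure (Z ×ˢ Z)) := by
        apply L.continuousOn_mul.mono
        rw [closure_prod_eq]
        rintro ⟨p, q⟩ ⟨hp, hq⟩
        exact pair_SU hUn hSU hSU6 (hCSU hp) (hCSU hq)
      have himg := hconts.image_closure
      have hmem : L.mul u v ∈ (fun q : G × G => L.mul q.1 q.2) '' closure (Z ×ˢ Z) := by
        refine ⟨(u, v), ?_, rfl⟩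
        rw [closure_prod_eq]
        exact ⟨hu, hv⟩
      refine closure_mono ?_ (himg hmem)
      rintro y ⟨⟨p, q⟩, ⟨hp, hq⟩, rfl⟩
      exact hmulZ p hp q hq
  have h1 := hSU.2.2.2.2.1 (closure Z) hsub hCSU
  have hx : x ∈ closure Z := subset_closure ⟨1, Or.inl (pchain_one x).symm⟩
  rw [h1] at hx
  exact hx

include hstd hUn hSU hSU6 in
/-- Escape lemma: eventually all "`n`-th order" sets are inside any neighborhood of `1`. -/
theorem escape {V : Set G} (hV : IsOpen V) (h1V : L.one ∈ V) :
    ∃ n : ℕ, 1 ≤ n ∧ ∀ x : G,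
      (∀ j ≤ n, pchain L x j ∈ SU ∧ pchain L (L.inv x) j ∈ SU) → x ∈ V := by
  by_contra hcon
  push_neg at hcon
  have hex : ∀ n : ℕ, ∃ x : G,
      (∀ j ≤ n + 1, pchain L x j ∈ SU ∧ pchain L (L.inv x) j ∈ SU) ∧ x ∉ V := by
    intro n
    obtain ⟨x, hx1, hx2⟩ := hcon (n + 1) (by omega)
    exact ⟨x, hx1, hx2⟩
  choose xs hxs hxsV using hex
  let 𝔘 : Ultrafilter ℕ := Ultrafilter.of Filter.atTop
  have h𝔘 : (𝔘 : Filter ℕ) ≤ Filter.atTop := Ultrafilter.of_le _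
  have hlimex : ∀ g : ℕ → G, (∀ᶠ n in Filter.atTop, g n ∈ SU) →
      ∃ y ∈ SU, Filter.Tendsto g 𝔘 (𝓝 y) := by
    intro g hg
    have : (𝔘.map g : Filter G) ≤ Filter.principal SU := by
      rw [Filter.le_principal_iff]
      exact Filter.mem_map.2 (h𝔘 hg)
    obtain ⟨y, hySU, hy⟩ := hSU.1.ultrafilter_le_nhds (𝔘.map g) this
    exact ⟨y, hySU, hy⟩
  have hxlim : ∃ y ∈ SU, Filter.Tendsto xs 𝔘 (𝓝 y) := by
    apply hlimex
    filter_upwards [Filter.eventually_ge_atTop 0] with n _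
    have := (hxs n 1 (by omega)).1
    rwa [pchain_one] at this
  obtain ⟨xoo, hxooSU, hxoo⟩ := hxlim
  have hmulc : ∀ {u v : G}, u ∈ SU → v ∈ SU →
      ContinuousAt (fun q : G × G => L.mul q.1 q.2) (u, v) := by
    intro u v hu hv
    exact L.continuousOn_mul.continuousAt
      (L.isOpen_Omega.mem_nhds (pair_SU hUn hSU hSU6 hu hv))
  -- limits of power chains
  have hchain : ∀ z : G, (Filter.Tendsto xs 𝔘 (𝓝 z)) → ∀ j : ℕ,
      (∀ᶠ n in Filter.atTop, pchain L (xs n) j ∈ SU) → True := fun _ _ _ _ => trivial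
  have key : ∀ j : ℕ, pchain L xoo j ∈ SU ∧
      Filter.Tendsto (fun n => pchain L (xs n) j) 𝔘 (𝓝 (pchain L xoo j)) := by
    intro j
    induction j with
    | zero =>
      constructor
      · exact one_mem_SU hSU
      · exact tendsto_const_nhds
    | succ j ih =>
      have hev : ∀ᶠ n in Filter.atTop, pchain L (xs n) (j + 1) ∈ SU := by
        filter_upwards [Filter.eventually_ge_atTop (j + 1)] with n hn
        exact (hxs n (j + 1) (by omega)).1
      obtain ⟨y, hySU, hy⟩ := hlimex _ hev
      have htend : Filter.Tendsto (fun n => pchain L (xs n) (j + 1)) 𝔘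
          (𝓝 (L.mul (pchain L xoo j) xoo)) := by
        have := (hmulc ih.1 hxooSU).tendsto.comp ((ih.2).prodMk_nhds hxoo)
        exact this
      have heq : y = L.mul (pchain L xoo j) xoo := tendsto_nhds_unique hy htend
      constructor
      · show L.mul (pchain L xoo j) xoo ∈ SU
        rw [← heq]; exact hySU
      · exact htend
  have hinvtend : Filter.Tendsto (fun n => L.inv (xs n)) 𝔘 (𝓝 (L.inv xoo)) :=
    ((inv_cont hstd).continuousAt).tendsto.comp hxoo
  have hinvSU : L.inv xoo ∈ SU := inv_mem_SU hSU hxooSU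
  have keyinv : ∀ j : ℕ, pchain L (L.inv xoo) j ∈ SU ∧
      Filter.Tendsto (fun n => pchain L (L.inv (xs n)) j) 𝔘 (𝓝 (pchain L (L.inv xoo) j)) := by
    intro j
    induction j with
    | zero => exact ⟨one_mem_SU hSU, tendsto_const_nhds⟩
    | succ j ih =>
      have hev : ∀ᶠ n in Filter.atTop, pchain L (L.inv (xs n)) (j + 1) ∈ SU := by
        filter_upwards [Filter.eventually_ge_atTop (j + 1)] with n hn
        exact (hxs n (j + 1) (by omega)).2
      obtain ⟨y, hySU, hy⟩ := hlimex _ hev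
      have htend : Filter.Tendsto (fun n => pchain L (L.inv (xs n)) (j + 1)) 𝔘
          (𝓝 (L.mul (pchain L (L.inv xoo) j) (L.inv xoo))) :=
        (hmulc ih.1 hinvSU).tendsto.comp ((ih.2).prodMk_nhds hinvtend)
      have heq : y = L.mul (pchain L (L.inv xoo) j) (L.inv xoo) := tendsto_nhds_unique hy htend
      exact ⟨by
        show L.mul (pchain L (L.inv xoo) j) (L.inv xoo) ∈ SU
        rw [← heq]; exact hySU, htend⟩
  have hone : xoo = L.one :=
    eq_one_of_powers hstd hUn hSU hSU6 (fun j => ⟨(key j).1, (keyinv j).1⟩)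
  have hxc : xoo ∈ Vᶜ := by
    have : IsClosed (Vᶜ) := hV.isClosed_compl
    exact this.mem_of_tendsto hxoo (Filter.Eventually.of_forall fun n => hxsV n)
  rw [hone] at hxc
  exact hxc h1V

end Test4
theorem ofReal_lt_two {t : ℝ} : ENNReal.ofReal |t| < 2 ↔ |t| < 2 := by
  rw [show (2 : ℝ≥0∞) = ENNReal.ofReal 2 by norm_num]
  exact ENNReal.ofReal_lt_ofReal_iff (by norm_num)

theorem isOpen_absLt (c : ℝ≥0∞) : IsOpen {t : ℝ | ENNReal.ofReal |t| < c} :=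
  isOpen_lt (ENNReal.continuous_ofReal.comp continuous_abs) continuous_const

section Test5
variable {G : Type*} [TopologicalSpace G] [T2Space G] {L : LocalGroup G}
  {Un : ℕ → Set G} {SU : Set G}
variable (hstd : L.Std) (hUn : L.IsProdChain Un) (hSU : L.IsSpecialNbhd Un SU)
  (hSU6 : SU ⊆ Un 6)

section AbstractAdd
variable {h : ℝ → G} (hA1 : ∀ t : ℝ, |t| ≤ 1 → h t ∈ SU)
  (hA2 : ∀ s t : ℝ, |s| ≤ 1 → |t| ≤ 1 → |s + t| ≤ 1 →
    (h s, h t) ∈ L.Omega ∧ h (s + t) = L.mul (h s) (h t))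

include hstd hUn hSU hSU6 hA1 hA2

theorem addf_zero : h 0 = L.one := by
  have h2 := hA2 0 0 (by norm_num) (by norm_num) (by norm_num)
  rw [show (0:ℝ) + 0 = 0 by norm_num] at h2
  exact eq_one_of_idem hstd h2.1 h2.2.symm

theorem addf_neg {t : ℝ} (ht : |t| ≤ 1) : L.inv (h t) = h (-t) := by
  have hnt : |(-t : ℝ)| ≤ 1 := by rwa [abs_neg]
  apply inv_eq_of_mul hstd (hA2 t (-t) ht hnt (by norm_num)).1
  rw [← (hA2 t (-t) ht hnt (by norm_num)).2]
  rw [show t + -t = 0 by ring]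
  exact addf_zero hstd hUn hSU hSU6 hA1 hA2

theorem addf_pchain {u : ℝ} (hu : |u| ≤ 1) :
    ∀ j : ℕ, |(j : ℝ) * u| ≤ 1 → pchain L (h u) j = h ((j : ℝ) * u) := by
  intro j
  induction j with
  | zero => intro _; rw [show ((0:ℕ):ℝ) * u = 0 by norm_num]; exact (addf_zero hstd hUn hSU hSU6 hA1 hA2).symm
  | succ j ih =>
    intro hju
    have hmono : |(j : ℝ) * u| ≤ |((j:ℕ)+1 : ℝ) * u| := by
      rw [abs_mul, abs_mul]
      apply mul_le_mul_of_nonneg_right _ (abs_nonneg u)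
      rw [abs_of_nonneg (by positivity : (0:ℝ) ≤ (j:ℝ)), abs_of_nonneg (by positivity : (0:ℝ) ≤ (j:ℝ)+1)]
      linarith
    have hju' : |(j : ℝ) * u| ≤ 1 := le_trans hmono (by push_cast at hju ⊢; linarith [hju])
    show L.mul (pchain L (h u) j) (h u) = _
    rw [ih hju']
    have := (hA2 ((j:ℝ)*u) u hju' hu (by push_cast at hju ⊢; rw [show (j:ℝ)*u + u = ((j:ℝ)+1)*u by ring]; exact hju)).2
    rw [← this]
    congr 1
    push_cast
    ring

theorem addf_chains_SU {n : ℕ} (hn : 1 ≤ n) {u : ℝ} (hu : |u| ≤ 1 / n) :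
    ∀ j ≤ n, pchain L (h u) j ∈ SU ∧ pchain L (L.inv (h u)) j ∈ SU := by
  have hu1 : |u| ≤ 1 := le_trans hu (by
    rw [div_le_one (by positivity)]
    exact_mod_cast hn)
  have hbound : ∀ j : ℕ, j ≤ n → |(j : ℝ) * u| ≤ 1 := by
    intro j hj
    rw [abs_mul, abs_of_nonneg (by positivity : (0:ℝ) ≤ (j:ℝ))]
    calc (j : ℝ) * |u| ≤ (n : ℝ) * (1 / n) := by
          apply mul_le_mul (by exact_mod_cast hj) hu (abs_nonneg u) (by positivity)
      _ = 1 := by field_simp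
  intro j hj
  constructor
  · rw [addf_pchain hstd hUn hSU hSU6 hA1 hA2 hu1 j (hbound j hj)]
    exact hA1 _ (hbound j hj)
  · rw [addf_neg hstd hUn hSU hSU6 hA1 hA2 hu1]
    have hnu : |(-u : ℝ)| ≤ 1 := by rwa [abs_neg]
    have hbnd : |(j:ℝ) * (-u)| ≤ 1 := by rw [mul_neg, abs_neg]; exact hbound j hj
    rw [addf_pchain hstd hUn hSU hSU6 hA1 hA2 hnu j hbnd]
    exact hA1 _ hbnd

theorem addf_continuousAt {t₀ : ℝ} (ht₀ : |t₀| < 1) : ContinuousAt h t₀ := by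
  rw [ContinuousAt, Filter.tendsto_def]
  intro W hW
  -- continuity of multiplication at (h t₀, 1)
  have hmc : ContinuousAt (fun q : G × G => L.mul q.1 q.2) (h t₀, L.one) :=
    L.continuousOn_mul.continuousAt (L.isOpen_Omega.mem_nhds (L.pair_one_right (h t₀)))
  have hWn : (fun q : G × G => L.mul q.1 q.2) ⁻¹' W ∈ 𝓝 (h t₀, L.one) := by
    apply hmc
    show W ∈ 𝓝 (L.mul (h t₀) L.one)
    rwa [L.mul_one]
  obtain ⟨A, hA, B, hB, hAB⟩ := mem_nhds_prod_iff.mp hWn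
  obtain ⟨n, hn1, hQ⟩ := escape hstd hUn hSU hSU6 isOpen_interior
    (mem_interior_iff_mem_nhds.mpr hB)
  have hδ : (0:ℝ) < min (1 / (n:ℝ)) (1 - |t₀|) := by
    apply lt_min (by positivity)
    linarith
  rw [Metric.mem_nhds_iff]
  refine ⟨min (1 / (n:ℝ)) (1 - |t₀|), hδ, ?_⟩
  intro t htb
  rw [Metric.mem_ball, Real.dist_eq] at htb
  have h1 : |t - t₀| ≤ 1 / n := le_of_lt (lt_of_lt_of_le htb (min_le_left _ _))
  have h2 : |t| ≤ 1 := by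
    have := abs_sub_abs_le_abs_sub t t₀
    have h3 : |t - t₀| < 1 - |t₀| := lt_of_lt_of_le htb (min_le_right _ _)
    linarith
  have hval : h t = L.mul (h t₀) (h (t - t₀)) := by
    have := (hA2 t₀ (t - t₀) (le_of_lt ht₀) (le_trans h1 (by
      rw [div_le_one (by positivity)]; exact_mod_cast hn1)) (by
      rw [show t₀ + (t - t₀) = t by ring]; exact h2)).2
    rw [show t₀ + (t - t₀) = t by ring] at this
    exact this
  have hmem : h (t - t₀) ∈ B :=
    interior_subset (hQ (h (t - t₀)) (addf_chains_SU hstd hUn hSU hSU6 hA1 hA2 hn1 h1))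
  have : (h t₀, h (t - t₀)) ∈ A ×ˢ B := ⟨mem_of_mem_nhds hA, hmem⟩
  have := hAB this
  rw [Set.mem_preimage] at this
  show h t ∈ W
  rw [hval]
  exact this

theorem ext_onePS : ∃ P : LocalOnePS L, P.r = 2 ∧
    ∀ t : ℝ, P.toFun t = L.mul (h (t / 2)) (h (t / 2)) := by
  refine ⟨⟨2, by norm_num, fun t => L.mul (h (t / 2)) (h (t / 2)), ?_, ?_, ?_⟩, rfl, fun _ => rfl⟩
  · intro t _
    exact lam_univ hstd _
  · intro t ht
    rw [Set.mem_setOf_eq, ofReal_lt_two] at ht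
    apply ContinuousAt.continuousWithinAt
    have hhalf : ContinuousAt (fun s : ℝ => h (s / 2)) t := by
      have hc : ContinuousAt h (t / 2) := by
        apply addf_continuousAt hstd hUn hSU hSU6 hA1 hA2
        rw [abs_div, abs_two]
        linarith [abs_nonneg t]
      have hdiv : ContinuousAt (fun s : ℝ => s / 2) t := (continuous_id.div_const 2).continuousAt
      show ContinuousAt (h ∘ fun s : ℝ => s / 2) t
      exact ContinuousAt.comp hc hdiv
    have hmc : ContinuousAt (fun q : G × G => L.mul q.1 q.2) (h (t/2), h (t/2)) := by
      apply L.continuousOn_mul.continuousAt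
      apply L.isOpen_Omega.mem_nhds
      apply pair_SU hUn hSU hSU6 <;>
        · apply hA1
          rw [abs_div, abs_two]
          linarith [abs_nonneg t]
    show ContinuousAt ((fun q : G × G => L.mul q.1 q.2) ∘ fun s : ℝ => (h (s/2), h (s/2))) t
    exact ContinuousAt.comp hmc (hhalf.prodMk hhalf)
  · intro s t hs ht hst
    rw [ofReal_lt_two] at hs ht hst
    have hs2 : |s / 2| ≤ 1 := by rw [abs_div, abs_two]; linarith [abs_nonneg s]
    have ht2 : |t / 2| ≤ 1 := by rw [abs_div, abs_two]; linarith [abs_nonneg t]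
    have hst2 : |s / 2 + t / 2| ≤ 1 := by
      rw [show s / 2 + t / 2 = (s + t) / 2 by ring, abs_div, abs_two]
      linarith [abs_nonneg (s+t)]
    have hcomm : L.mul (h (s/2)) (h (t/2)) = L.mul (h (t/2)) (h (s/2)) := by
      rw [← (hA2 (s/2) (t/2) hs2 ht2 hst2).2, ← (hA2 (t/2) (s/2) ht2 hs2 (by rwa [add_comm])).2,
        add_comm]
    have hq := quad_lemma hstd hUn hSU hSU6 (hA1 _ hs2) (hA1 _ ht2) hcomm
    refine ⟨hq.1, ?_⟩
    show L.mul (h ((s+t)/2)) (h ((s+t)/2)) = _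
    have hmid : h ((s+t)/2) = L.mul (h (s/2)) (h (t/2)) := by
      rw [show (s+t)/2 = s/2 + t/2 by ring]
      exact (hA2 (s/2) (t/2) hs2 ht2 hst2).2
    rw [hmid, ← hq.2]

end AbstractAdd
end Test5
section Test6
variable {G : Type*} [TopologicalSpace G] [T2Space G] {L : LocalGroup G}
  {Un : ℕ → Set G} {SU : Set G}
variable (hstd : L.Std) (hUn : L.IsProdChain Un) (hSU : L.IsSpecialNbhd Un SU)
  (hSU6 : SU ⊆ Un 6)

theorem ofReal_half_lt {t : ℝ} {r : ℝ≥0∞} (h : ENNReal.ofReal |t| < r) :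
    ENNReal.ofReal |t / 2| < r :=
  lt_of_le_of_lt (ENNReal.ofReal_le_ofReal (by
    rw [abs_div, abs_two]; linarith [abs_nonneg t])) h

theorem onePS_half (Z : LocalOnePS L) {u : ℝ} (hu : ENNReal.ofReal |u| < Z.r) :
    Z.toFun u = L.mul (Z.toFun (u / 2)) (Z.toFun (u / 2)) := by
  have h := Z.add (u/2) (u/2) (ofReal_half_lt hu) (ofReal_half_lt hu)
    (by rw [show u/2 + u/2 = u by ring]; exact hu)
  rw [show u/2 + u/2 = u by ring] at h
  exact h.2

theorem onePS_agree {X Y : LocalOnePS L} (hXY : LocalGroup.OnePSEquiv X Y) {t : ℝ}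
    (hX : ENNReal.ofReal |t| < X.r) (hY : ENNReal.ofReal |t| < Y.r) :
    X.toFun t = Y.toFun t := by
  obtain ⟨s, hs, hsX, hsY, hag⟩ := hXY
  have key : ∀ m : ℕ, ∀ u : ℝ, |u| < s * 2 ^ m → ENNReal.ofReal |u| < X.r →
      ENNReal.ofReal |u| < Y.r → X.toFun u = Y.toFun u := by
    intro m
    induction m with
    | zero => intro u hu _ _; exact hag u (by simpa using hu)
    | succ m ih =>
      intro u hu huX huY
      rw [onePS_half X huX, onePS_half Y huY,
        ih (u/2) (by rw [abs_div, abs_two]; rw [pow_succ] at hu; linarith [abs_nonneg u])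
          (ofReal_half_lt huX) (ofReal_half_lt huY)]
  obtain ⟨m, hm⟩ : ∃ m : ℕ, |t| < s * 2 ^ m := by
    obtain ⟨n, hn⟩ := exists_nat_gt (|t| / s)
    refine ⟨n, ?_⟩
    have h2 : (n : ℝ) ≤ 2 ^ n := by
      exact_mod_cast (Nat.lt_two_pow_self (n := n)).le
    calc |t| = s * (|t| / s) := by field_simp
      _ < s * n := by apply mul_lt_mul_of_pos_left hn hs
      _ ≤ s * 2 ^ n := by nlinarith
  exact key m t hm hX hY

theorem germEval_eq {X : LGQuot L} {Y : LocalOnePS L} (hY : ⟦Y⟧ = X) {t : ℝ}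
    (ht : ENNReal.ofReal |t| < Y.r) : germEval L X t = Y.toFun t := by
  have hE : ∃ Z : LocalOnePS L, ⟦Z⟧ = X ∧ ENNReal.ofReal |t| < Z.r := ⟨Y, hY, ht⟩
  rw [LocalGroup.germEval, dif_pos hE]
  have hspec := hE.choose_spec
  have hequiv : LocalGroup.OnePSEquiv hE.choose Y :=
    Quotient.exact (hspec.1.trans hY.symm)
  exact onePS_agree hequiv hspec.2 ht

theorem rep_sup2 {X : LGQuot L} {Y Z : LocalOnePS L} (hY : ⟦Y⟧ = X) (hZ : ⟦Z⟧ = X) :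
    ∃ W : LocalOnePS L, ⟦W⟧ = X ∧ Y.r ≤ W.r ∧ Z.r ≤ W.r := by
  rcases le_total Y.r Z.r with hle | hle
  · exact ⟨Z, hZ, hle, le_rfl⟩
  · exact ⟨Y, hY, le_rfl, hle⟩

theorem germ_add {X : LGQuot L} {s t : ℝ} (hs : s ∈ germDomain L X)
    (ht : t ∈ germDomain L X) (hst : s + t ∈ germDomain L X) :
    (germEval L X s, germEval L X t) ∈ L.Omega ∧
      germEval L X (s + t) = L.mul (germEval L X s) (germEval L X t) := by
  obtain ⟨Y₁, hY₁, hr₁⟩ := hs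
  obtain ⟨Y₂, hY₂, hr₂⟩ := ht
  obtain ⟨Y₃, hY₃, hr₃⟩ := hst
  obtain ⟨W₁, hW₁, h₁₁, h₁₂⟩ := rep_sup2 hY₁ hY₂
  obtain ⟨W, hW, hW1, hW3⟩ := rep_sup2 hW₁ hY₃
  have hsW : ENNReal.ofReal |s| < W.r := lt_of_lt_of_le hr₁ (le_trans h₁₁ hW1)
  have htW : ENNReal.ofReal |t| < W.r := lt_of_lt_of_le hr₂ (le_trans h₁₂ hW1)
  have hstW : ENNReal.ofReal |s + t| < W.r := lt_of_lt_of_le hr₃ hW3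
  have hadd := W.add s t hsW htW hstW
  rw [germEval_eq hW hsW, germEval_eq hW htW, germEval_eq hW hstW]
  exact hadd

theorem germ_mem_domain {X : LGQuot L} {Y : LocalOnePS L} (hY : ⟦Y⟧ = X) {t : ℝ}
    (ht : ENNReal.ofReal |t| < Y.r) : t ∈ germDomain L X := ⟨Y, hY, ht⟩

end Test6
section Test7
variable {G : Type*} [TopologicalSpace G] [T2Space G] {L : LocalGroup G}
  {Un : ℕ → Set G} {SU : Set G}
variable (hstd : L.Std) (hUn : L.IsProdChain Un) (hSU : L.IsSpecialNbhd Un SU)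
  (hSU6 : SU ⊆ Un 6)

section KK
variable {X : LGQuot L} (hX1 : Set.Icc (-1 : ℝ) 1 ⊆ germDomain L X)
  (hX2 : ∀ t ∈ Set.Icc (-1 : ℝ) 1, germEval L X t ∈ SU)

include hX2 in
theorem K_A1 : ∀ t : ℝ, |t| ≤ 1 → germEval L X t ∈ SU := by
  intro t ht
  exact hX2 t (by rw [Set.mem_Icc]; constructor <;> [linarith [abs_le.mp ht]; linarith [abs_le.mp ht]])

include hX1 in
theorem K_A2 : ∀ s t : ℝ, |s| ≤ 1 → |t| ≤ 1 → |s + t| ≤ 1 →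
    (germEval L X s, germEval L X t) ∈ L.Omega ∧
      germEval L X (s + t) = L.mul (germEval L X s) (germEval L X t) := by
  intro s t hs ht hst
  have hmem : ∀ u : ℝ, |u| ≤ 1 → u ∈ germDomain L X := by
    intro u hu
    exact hX1 (by rw [Set.mem_Icc]; constructor <;> [linarith [abs_le.mp hu]; linarith [abs_le.mp hu]])
  exact germ_add (hmem s hs) (hmem t ht) (hmem (s+t) hst)

include hstd hUn hSU hSU6 hX1 hX2 in
theorem K_rep : ∃ P : LocalOnePS L, ⟦P⟧ = X ∧ P.r = 2 ∧
    ∀ t : ℝ, P.toFun t = L.mul (germEval L X (t / 2)) (germEval L X (t / 2)) := by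
  have hA1 := K_A1 (X := X) hX2
  have hA2 := K_A2 (X := X) hX1
  obtain ⟨P, hPr, hPf⟩ := ext_onePS hstd hUn hSU hSU6 hA1 hA2
  obtain ⟨Y, hY, h0r⟩ := hX1 (by norm_num : (0:ℝ) ∈ Set.Icc (-1:ℝ) 1)
  obtain ⟨s₀, hs₀, hs₀r⟩ := LocalGroup.onePS_exists_small Y
  have hequiv : LocalGroup.OnePSEquiv P Y := by
    refine ⟨min s₀ 1, lt_min hs₀ one_pos, ?_, ?_, ?_⟩
    · rw [hPr]
      calc ENNReal.ofReal (min s₀ 1) ≤ ENNReal.ofReal 1 :=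
            ENNReal.ofReal_le_ofReal (min_le_right _ _)
        _ < 2 := by rw [ENNReal.ofReal_one]; exact ENNReal.one_lt_two
    · exact lt_of_le_of_lt (ENNReal.ofReal_le_ofReal (min_le_left _ _)) hs₀r
    · intro τ hτ
      have hτ1 : |τ| ≤ 1 := le_of_lt (lt_of_lt_of_le hτ (min_le_right _ _))
      have hτY : ENNReal.ofReal |τ| < Y.r :=
        lt_of_lt_of_le (ENNReal.ofReal_lt_ofReal_iff hs₀ |>.mpr
          (lt_of_lt_of_le hτ (min_le_left _ _))) hs₀r.le
      have hτ2 : |τ / 2| ≤ 1 := by rw [abs_div, abs_two]; linarith [abs_le.mp hτ1]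
      rw [hPf τ, ← germEval_eq hY hτY]
      have := (hA2 (τ/2) (τ/2) hτ2 hτ2 (by rw [show τ/2 + τ/2 = τ by ring]; exact hτ1)).2
      rw [show τ/2 + τ/2 = τ by ring] at this
      exact this.symm
  exact ⟨P, (Quotient.sound hequiv).trans hY, hPr, hPf⟩

include hstd hUn hSU hSU6 hX1 hX2 in
theorem K_dom2 {t : ℝ} (ht : |t| < 2) : t ∈ germDomain L X := by
  obtain ⟨P, hP, hPr, _⟩ := K_rep hstd hUn hSU hSU6 hX1 hX2
  exact germ_mem_domain hP (by rw [hPr]; exact ofReal_lt_two.mpr ht)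

include hstd hUn hSU hSU6 hX1 hX2 in
theorem K_half {t : ℝ} (ht : |t| < 2) :
    germEval L X t = L.mul (germEval L X (t / 2)) (germEval L X (t / 2)) := by
  obtain ⟨P, hP, hPr, hPf⟩ := K_rep hstd hUn hSU hSU6 hX1 hX2
  rw [germEval_eq hP (by rw [hPr]; exact ofReal_lt_two.mpr ht), hPf]

include hstd hUn hSU hSU6 hX1 hX2 in
theorem K_add2 {s t : ℝ} (hs : |s| < 2) (ht : |t| < 2) (hst : |s + t| < 2) :
    (germEval L X s, germEval L X t) ∈ L.Omega ∧
      germEval L X (s + t) = L.mul (germEval L X s) (germEval L X t) := by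
  obtain ⟨P, hP, hPr, _⟩ := K_rep hstd hUn hSU hSU6 hX1 hX2
  have h1 := K_dom2 hstd hUn hSU hSU6 hX1 hX2 hs
  have h2 := K_dom2 hstd hUn hSU hSU6 hX1 hX2 ht
  have h3 := K_dom2 hstd hUn hSU hSU6 hX1 hX2 hst
  exact germ_add h1 h2 h3

include hstd hUn hSU hSU6 hX1 hX2 in
theorem K_contAt {t₀ : ℝ} (ht₀ : |t₀| < 2) : ContinuousAt (germEval L X) t₀ := by
  obtain ⟨P, hP, hPr, _⟩ := K_rep hstd hUn hSU hSU6 hX1 hX2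
  have hopen : IsOpen {t : ℝ | ENNReal.ofReal |t| < P.r} := isOpen_absLt _
  have hmem : t₀ ∈ {t : ℝ | ENNReal.ofReal |t| < P.r} := by
    rw [Set.mem_setOf_eq, hPr]; exact ofReal_lt_two.mpr ht₀
  have hc : ContinuousAt P.toFun t₀ := P.continuousOn.continuousAt (hopen.mem_nhds hmem)
  apply hc.congr
  apply Filter.eventuallyEq_of_mem (hopen.mem_nhds hmem)
  intro t htm
  exact (germEval_eq hP htm).symm

end KK
end Test7
/-- The subbasis of the germ topology. -/
def SBB {G : Type*} [TopologicalSpace G] (L : LocalGroup G) : Set (Set (LGQuot L)) :=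
  {S | ∃ (C : Set ℝ) (U : Set G), IsCompact C ∧ C ⊆ Set.Ioo (-2 : ℝ) 2 ∧ IsOpen U ∧
    S = {X : LGQuot L | C ⊆ germDomain L X ∧ ∀ t ∈ C, germEval L X t ∈ U}}

theorem isOpen_SBB {G : Type*} [TopologicalSpace G] {L : LocalGroup G} {S : Set (LGQuot L)}
    (hS : S ∈ SBB L) : IsOpen S :=
  TopologicalSpace.GenerateOpen.basic S hS

theorem nhds_LG {G : Type*} [TopologicalSpace G] (L : LocalGroup G) (X : LGQuot L) :
    𝓝 X = ⨅ s ∈ {s | X ∈ s ∧ s ∈ SBB L}, Filter.principal s :=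
  TopologicalSpace.nhds_generateFrom

theorem two_pow_ge_one (m : ℕ) : (1 : ℝ) ≤ 2 ^ m := one_le_pow₀ (by norm_num)

theorem inv_two_pow_le_one (m : ℕ) : (1 : ℝ) / 2 ^ m ≤ 1 := by
  rw [div_le_one (by positivity)]
  exact two_pow_ge_one m

theorem germEval_const {G : Type*} [TopologicalSpace G] [T2Space G] (L : LocalGroup G)
    (t : ℝ) : germEval L (⟦constOnePS L⟧ : LGQuot L) t = L.one :=
  germEval_eq rfl (by exact ENNReal.ofReal_lt_top)

section Test8
variable {G : Type*} [TopologicalSpace G] [T2Space G] {L : LocalGroup G}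
  {Un : ℕ → Set G} {SU : Set G}
variable (hstd : L.Std) (hUn : L.IsProdChain Un) (hSU : L.IsSpecialNbhd Un SU)
  (hSU6 : SU ⊆ Un 6)

include hstd hUn hSU hSU6 in
theorem K_inj {X Y : LGQuot L}
    (hX1 : Set.Icc (-1 : ℝ) 1 ⊆ germDomain L X)
    (hX2 : ∀ t ∈ Set.Icc (-1 : ℝ) 1, germEval L X t ∈ SU)
    (hY1 : Set.Icc (-1 : ℝ) 1 ⊆ germDomain L Y)
    (hY2 : ∀ t ∈ Set.Icc (-1 : ℝ) 1, germEval L Y t ∈ SU)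
    (hE : germEval L X 1 = germEval L Y 1) : X = Y := by
  have habs : ∀ u : ℝ, |u| ≤ 1 → u ∈ Set.Icc (-1:ℝ) 1 := by
    intro u hu; rw [Set.mem_Icc]; exact ⟨by linarith [abs_le.mp hu], by linarith [abs_le.mp hu]⟩
  have hsq := hSU.2.2.2.2.2
  -- agreement at 1/2^m
  have d1 : ∀ m : ℕ, germEval L X ((1:ℝ)/2^m) = germEval L Y ((1:ℝ)/2^m) := by
    intro m
    induction m with
    | zero => simpa using hE
    | succ m ih =>
      have hbm : |(1:ℝ)/2^m| < 2 := by
        rw [abs_of_pos (by positivity)]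
        linarith [inv_two_pow_le_one m]
      have hXh := K_half hstd hUn hSU hSU6 hX1 hX2 hbm
      have hYh := K_half hstd hUn hSU hSU6 hY1 hY2 hbm
      rw [show ((1:ℝ)/2^m)/2 = (1:ℝ)/2^(m+1) by rw [pow_succ]; ring] at hXh hYh
      have hmem : ((1:ℝ)/2^(m+1)) ∈ Set.Icc (-1:ℝ) 1 :=
        habs _ (by rw [abs_of_pos (by positivity)]; exact inv_two_pow_le_one (m+1))
      apply hsq _ (hX2 _ hmem) _ (hY2 _ hmem)
      rw [← hXh, ← hYh, ih]
  have hzX : germEval L X 0 = L.one :=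
    addf_zero hstd hUn hSU hSU6 (K_A1 hX2) (K_A2 hX1)
  have hzY : germEval L Y 0 = L.one :=
    addf_zero hstd hUn hSU hSU6 (K_A1 hY2) (K_A2 hY1)
  -- agreement at k/2^m
  have dk : ∀ m : ℕ, ∀ k : ℕ, (k:ℝ)/2^m ≤ 1 →
      germEval L X ((k:ℝ)/2^m) = germEval L Y ((k:ℝ)/2^m) := by
    intro m k
    induction k with
    | zero => intro _; norm_num [hzX, hzY]
    | succ k ih =>
      intro hk
      have hkk : (k:ℝ)/2^m ≤ 1 := by
        apply le_trans _ hk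
        apply div_le_div_of_nonneg_right _ (by positivity)
        · push_cast; linarith
      have hs : |(k:ℝ)/2^m| < 2 := by
        rw [abs_of_nonneg (by positivity)]; linarith
      have ht : |(1:ℝ)/2^m| < 2 := by
        rw [abs_of_pos (by positivity)]; linarith [inv_two_pow_le_one m]
      have hst : |(k:ℝ)/2^m + (1:ℝ)/2^m| < 2 := by
        rw [show (k:ℝ)/2^m + (1:ℝ)/2^m = ((k:ℝ)+1)/2^m by ring,
          abs_of_nonneg (by positivity)]
        push_cast at hk
        linarith
      have hXa := (K_add2 hstd hUn hSU hSU6 hX1 hX2 hs ht hst).2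
      have hYa := (K_add2 hstd hUn hSU hSU6 hY1 hY2 hs ht hst).2
      rw [show (k:ℝ)/2^m + (1:ℝ)/2^m = (((k+1):ℕ):ℝ)/2^m by push_cast; ring] at hXa hYa
      rw [hXa, hYa, ih hkk, d1 m]
  -- negation
  have dneg : ∀ u : ℝ, |u| ≤ 1 → germEval L X u = germEval L Y u →
      germEval L X (-u) = germEval L Y (-u) := by
    intro u hu hagr
    rw [← addf_neg hstd hUn hSU hSU6 (K_A1 hX2) (K_A2 hX1) hu,
      ← addf_neg hstd hUn hSU hSU6 (K_A1 hY2) (K_A2 hY1) hu, hagr]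
  -- agreement at all dyadic rationals
  have dInt : ∀ m : ℕ, ∀ k : ℤ, |(k:ℝ)/2^m| ≤ 1 →
      germEval L X ((k:ℝ)/2^m) = germEval L Y ((k:ℝ)/2^m) := by
    intro m k hk
    rcases le_or_gt 0 k with hk0 | hk0
    · lift k to ℕ using hk0
      apply dk
      rw [abs_of_nonneg (by positivity)] at hk
      push_cast at hk ⊢
      linarith
    · obtain ⟨n, rfl⟩ : ∃ n : ℕ, k = -(n:ℤ) := ⟨k.natAbs, by omega⟩
      have h1 : ((-(n:ℤ) : ℤ):ℝ)/2^m = -((n:ℝ)/2^m) := by push_cast; ring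
      rw [h1]
      apply dneg
      · rw [abs_of_nonneg (by positivity)]
        rw [h1, abs_neg, abs_of_nonneg (by positivity)] at hk
        exact hk
      · apply dk
        rw [h1, abs_neg, abs_of_nonneg (by positivity)] at hk
        exact hk
  -- agreement on (-1, 1) by continuity
  have hagree : ∀ t ∈ Set.Ioo (-1:ℝ) 1, germEval L X t = germEval L Y t := by
    rintro t ⟨ht1, ht2⟩
    set d : ℕ → ℝ := fun m => ((⌊t * 2^m⌋ : ℤ) : ℝ)/2^m with hd
    have hdagr : ∀ m, germEval L X (d m) = germEval L Y (d m) := by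
      intro m
      apply dInt
      have hp : (0:ℝ) < 2^m := by positivity
      have hub : ((⌊t * 2^m⌋ : ℤ) : ℝ) ≤ 2^m := by
        calc ((⌊t * 2^m⌋ : ℤ) : ℝ) ≤ t * 2^m := Int.floor_le _
          _ ≤ 2^m := by nlinarith
      have hlb : -(2^m : ℝ) ≤ ((⌊t * 2^m⌋ : ℤ) : ℝ) := by
        have : ((-(2^m) : ℤ) : ℝ) ≤ t * 2^m := by push_cast; nlinarith
        have h2 := Int.le_floor.mpr this
        exact_mod_cast h2
      rw [abs_div, abs_of_pos hp, div_le_one hp, abs_le]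
      constructor <;> linarith
    have hdten : Filter.Tendsto d Filter.atTop (𝓝 t) := by
      have hbd : ∀ m, |d m - t| ≤ (1/2 : ℝ)^m := by
        intro m
        have hp : (0:ℝ) < 2^m := by positivity
        have h1 : d m - t = (((⌊t * 2^m⌋ : ℤ) : ℝ) - t * 2^m)/2^m := by
          simp only [hd]
          rw [sub_div, mul_div_cancel_right₀ t hp.ne']
        rw [h1, abs_div, abs_of_pos hp, div_le_iff₀ hp, one_div, inv_pow,
          inv_mul_cancel₀ (by positivity)]
        have h2 := Int.floor_le (t * 2^m)
        have h3 := Int.lt_floor_add_one (t * 2^m)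
        rw [abs_le]
        constructor <;> linarith
      have hz : Filter.Tendsto (fun m : ℕ => d m - t) Filter.atTop (𝓝 0) := by
        apply squeeze_zero_norm hbd
        exact tendsto_pow_atTop_nhds_zero_of_lt_one (by norm_num) (by norm_num)
      have := hz.add_const t
      simpa using this
    have ht2' : |t| < 2 := by rw [abs_lt]; constructor <;> linarith
    have TX := (K_contAt hstd hUn hSU hSU6 hX1 hX2 ht2').tendsto.comp hdten
    have TY := (K_contAt hstd hUn hSU hSU6 hY1 hY2 ht2').tendsto.comp hdten
    exact tendsto_nhds_unique TX (TY.congr fun m => (hdagr m).symm)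
  -- conclude
  obtain ⟨P, hP, hPr, _⟩ := K_rep hstd hUn hSU hSU6 hX1 hX2
  obtain ⟨Q, hQ, hQr, _⟩ := K_rep hstd hUn hSU hSU6 hY1 hY2
  have hequiv : LocalGroup.OnePSEquiv P Q := by
    refine ⟨1, one_pos, ?_, ?_, ?_⟩
    · rw [hPr, ENNReal.ofReal_one]; exact ENNReal.one_lt_two
    · rw [hQr, ENNReal.ofReal_one]; exact ENNReal.one_lt_two
    · intro τ hτ
      have hτ2 : ENNReal.ofReal |τ| < 2 := ofReal_lt_two.mpr (by linarith [abs_lt.mp hτ])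
      rw [← germEval_eq hP (by rw [hPr]; exact hτ2), ← germEval_eq hQ (by rw [hQr]; exact hτ2)]
      exact hagree τ ⟨by linarith [abs_lt.mp hτ], by linarith [abs_lt.mp hτ]⟩
  rw [← hP, ← hQ]
  exact Quotient.sound hequiv

end Test8
theorem statement_5' {G : Type*} [TopologicalSpace G] [T2Space G] [LocallyCompactSpace G]
    (L : LocalGroup G) (hstd : L.Std) (Un : ℕ → Set G) (hUn : L.IsProdChain Un)
    (hNSS : L.NSS) (SU : Set G) (hSU : L.IsSpecialNbhd Un SU) (hSU6 : SU ⊆ Un 6)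
    (𝒦 : Set (LGQuot L))
    (h𝒦 : 𝒦 = {X : LGQuot L | Set.Icc (-1 : ℝ) 1 ⊆ germDomain L X ∧
      ∀ t ∈ Set.Icc (-1 : ℝ) 1, germEval L X t ∈ SU})
    (K : Set G) (hK : K = (fun X => germEval L X 1) '' 𝒦) :
    IsCompact 𝒦 ∧ 𝒦 ∈ 𝓝 (⟦constOnePS L⟧ : LGQuot L) ∧
      Set.BijOn (fun X => germEval L X 1) 𝒦 K ∧
      ∃ e : ↥𝒦 ≃ₜ ↥K, ∀ x : ↥𝒦, (e x : G) = germEval L (↑x : LGQuot L) 1 := by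
  classical
  have hKmem : ∀ {X : LGQuot L}, X ∈ 𝒦 →
      (Set.Icc (-1 : ℝ) 1 ⊆ germDomain L X) ∧
        (∀ t ∈ Set.Icc (-1 : ℝ) 1, germEval L X t ∈ SU) := by
    intro X hX; rwa [h𝒦] at hX
  have habsI : ∀ t : ℝ, t ∈ Set.Icc (-1:ℝ) 1 → |t| ≤ 1 :=
    fun t ht => abs_le.mpr (Set.mem_Icc.mp ht)
  have hImem : ∀ t : ℝ, |t| ≤ 1 → t ∈ Set.Icc (-1:ℝ) 1 :=
    fun t ht => Set.mem_Icc.mpr (abs_le.mp ht)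
  have hmulcSU : ∀ {u v : G}, u ∈ SU → v ∈ SU →
      ContinuousAt (fun q : G × G => L.mul q.1 q.2) (u, v) := fun hu hv =>
    L.continuousOn_mul.continuousAt (L.isOpen_Omega.mem_nhds (pair_SU hUn hSU hSU6 hu hv))
  -- PART 1 : compactness
  have hcomp : IsCompact 𝒦 := by
    rw [isCompact_iff_ultrafilter_le_nhds]
    intro F hF
    have h𝒦F : 𝒦 ∈ F := Filter.le_principal_iff.mp hF
    have hfex : ∀ t : ℝ, ∃ y : G,
        |t| ≤ 1 → y ∈ SU ∧ Filter.Tendsto (fun X => germEval L X t) F (𝓝 y) := by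
      intro t
      by_cases ht : |t| ≤ 1
      · have hsub : (F.map (fun X => germEval L X t) : Filter G) ≤ Filter.principal SU := by
          rw [Filter.le_principal_iff]
          apply Filter.mem_map.mpr
          filter_upwards [h𝒦F] with X hX
          exact (hKmem hX).2 t (hImem t ht)
        obtain ⟨y, hySU, hy⟩ := hSU.1.ultrafilter_le_nhds (F.map (fun X => germEval L X t)) hsub
        exact ⟨y, fun _ => ⟨hySU, hy⟩⟩
      · exact ⟨L.one, fun h => absurd h ht⟩
    choose f hf using hfex
    have hA1f : ∀ t : ℝ, |t| ≤ 1 → f t ∈ SU := fun t ht => (hf t ht).1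
    have htend : ∀ t : ℝ, |t| ≤ 1 →
        Filter.Tendsto (fun X => germEval L X t) F (𝓝 (f t)) := fun t ht => (hf t ht).2
    have hA2f : ∀ s t : ℝ, |s| ≤ 1 → |t| ≤ 1 → |s + t| ≤ 1 →
        (f s, f t) ∈ L.Omega ∧ f (s + t) = L.mul (f s) (f t) := by
      intro s t hs ht hst
      have Tm : Filter.Tendsto (fun X => L.mul (germEval L X s) (germEval L X t)) F
          (𝓝 (L.mul (f s) (f t))) :=
        (hmulcSU (hA1f s hs) (hA1f t ht)).tendsto.comp
          ((htend s hs).prodMk_nhds (htend t ht))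
      have hee : (fun X => L.mul (germEval L X s) (germEval L X t)) =ᶠ[(F : Filter _)]
          (fun X => germEval L X (s + t)) := by
        filter_upwards [h𝒦F] with X hX
        exact ((K_A2 (hKmem hX).1 s t hs ht hst).2).symm
      have T2' := Filter.Tendsto.congr' hee Tm
      exact ⟨pair_SU hUn hSU hSU6 (hA1f s hs) (hA1f t ht),
        tendsto_nhds_unique (htend (s+t) hst) T2'⟩
    obtain ⟨Pf, hPfr, hPff⟩ := ext_onePS hstd hUn hSU hSU6 hA1f hA2f
    set X₀ : LGQuot L := ⟦Pf⟧ with hX₀def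
    have hfmid : ∀ t : ℝ, |t| ≤ 1 → Pf.toFun t = f t := by
      intro t ht
      rw [hPff t]
      have h2 : |t/2| ≤ 1 := by rw [abs_div, abs_two]; linarith [abs_le.mp ht, abs_nonneg t]
      have := (hA2f (t/2) (t/2) h2 h2 (by rw [show t/2+t/2 = t by ring]; exact ht)).2
      rw [show t/2+t/2 = t by ring] at this
      rw [← this]
    have hX₀dom : ∀ t : ℝ, |t| < 2 → t ∈ germDomain L X₀ := fun t ht =>
      germ_mem_domain rfl (by rw [hPfr]; exact ofReal_lt_two.mpr ht)
    have hX₀eval : ∀ t : ℝ, |t| < 2 → germEval L X₀ t = Pf.toFun t := fun t ht =>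
      germEval_eq rfl (by rw [hPfr]; exact ofReal_lt_two.mpr ht)
    have hX₀K : X₀ ∈ 𝒦 := by
      rw [h𝒦]
      refine ⟨fun t htI => hX₀dom t (lt_of_le_of_lt (habsI t htI) one_lt_two), fun t htI => ?_⟩
      rw [hX₀eval t (lt_of_le_of_lt (habsI t htI) one_lt_two), hfmid t (habsI t htI)]
      exact hA1f t (habsI t htI)
    refine ⟨X₀, hX₀K, ?_⟩
    have hptw : ∀ t : ℝ, |t| < 2 →
        Filter.Tendsto (fun X => germEval L X t) F (𝓝 (germEval L X₀ t)) := by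
      intro t ht
      have h2 : |t/2| ≤ 1 := by rw [abs_div, abs_two]; linarith [abs_lt.mp ht, abs_nonneg t]
      have hy : germEval L X₀ t = L.mul (f (t/2)) (f (t/2)) := by
        rw [hX₀eval t ht, hPff t]
      have Tm : Filter.Tendsto (fun X => L.mul (germEval L X (t/2)) (germEval L X (t/2))) F
          (𝓝 (L.mul (f (t/2)) (f (t/2)))) :=
        (hmulcSU (hA1f _ h2) (hA1f _ h2)).tendsto.comp
          ((htend _ h2).prodMk_nhds (htend _ h2))
      have hee : (fun X => L.mul (germEval L X (t/2)) (germEval L X (t/2))) =ᶠ[(F : Filter _)]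
          (fun X => germEval L X t) := by
        filter_upwards [h𝒦F] with X hX
        exact (K_half hstd hUn hSU hSU6 (hKmem hX).1 (hKmem hX).2 ht).symm
      rw [hy]
      exact Filter.Tendsto.congr' hee Tm
    rw [nhds_LG L X₀]
    refine le_iInf fun s => le_iInf fun hs => ?_
    rw [Filter.le_principal_iff]
    obtain ⟨hX₀s, hsS⟩ := hs
    obtain ⟨C, U, hCc, hC2, hUo, rfl⟩ := hsS
    obtain ⟨hCdom, hCU⟩ := hX₀s
    have hC2' : ∀ t ∈ C, |t| < 2 := by
      intro t htC
      have := hC2 htC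
      rw [Set.mem_Ioo] at this
      rw [abs_lt]
      exact this
    have hloc : ∀ t₀ ∈ C, ∃ (ε : ℝ) (V : Set (LGQuot L)), 0 < ε ∧ V ∈ F ∧
        ∀ X, X ∈ V → X ∈ 𝒦 → ∀ t ∈ C, |t - t₀| < ε → germEval L X t ∈ U := by
      intro t₀ ht₀C
      have ht₀2 : |t₀| < 2 := hC2' t₀ ht₀C
      have hy₀U : germEval L X₀ t₀ ∈ U := hCU t₀ ht₀C
      have hmc : ContinuousAt (fun q : G × G => L.mul q.1 q.2) (germEval L X₀ t₀, L.one) :=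
        L.continuousOn_mul.continuousAt
          (L.isOpen_Omega.mem_nhds (L.pair_one_right (germEval L X₀ t₀)))
      have hWn : (fun q : G × G => L.mul q.1 q.2) ⁻¹' U ∈ 𝓝 (germEval L X₀ t₀, L.one) := by
        apply hmc
        show U ∈ 𝓝 (L.mul (germEval L X₀ t₀) L.one)
        rw [L.mul_one]
        exact hUo.mem_nhds hy₀U
      obtain ⟨A, hA, Bs, hBs, hAB⟩ := mem_nhds_prod_iff.mp hWn
      obtain ⟨n, hn1, hQ⟩ := escape hstd hUn hSU hSU6 isOpen_interior
        (mem_interior_iff_mem_nhds.mpr hBs)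
      refine ⟨1/(n:ℝ), {X | germEval L X t₀ ∈ A}, by positivity, ?_, ?_⟩
      · exact Filter.mem_map.mp (hptw t₀ ht₀2 hA)
      · intro X hXV hXK t htC htε
        have hint := hKmem hXK
        have ht2 : |t| < 2 := hC2' t htC
        have hd1 : |t - t₀| ≤ 1/(n:ℝ) := le_of_lt htε
        have hd2 : |t - t₀| < 2 := by
          have h1n : 1/(n:ℝ) ≤ 1 := by
            rw [div_le_one (by exact_mod_cast hn1 : (0:ℝ) < n)]
            exact_mod_cast hn1
          linarith [lt_of_lt_of_le htε h1n]
        have hchains := addf_chains_SU hstd hUn hSU hSU6 (K_A1 hint.2) (K_A2 hint.1) hn1 hd1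
        have hBmem : germEval L X (t - t₀) ∈ Bs := interior_subset (hQ _ hchains)
        have hadd := (K_add2 hstd hUn hSU hSU6 hint.1 hint.2 ht₀2 hd2
          (by rw [show t₀ + (t - t₀) = t by ring]; exact ht2)).2
        rw [show t₀ + (t - t₀) = t by ring] at hadd
        rw [hadd]
        have hpair : (germEval L X t₀, germEval L X (t - t₀)) ∈ A ×ˢ Bs :=
          Set.mk_mem_prod hXV hBmem
        exact hAB hpair
    choose! ε V hε hVF hVp using hloc
    obtain ⟨T, hTcov⟩ := hCc.elim_nhds_subcover'
      (fun t₀ _ => Metric.ball t₀ (ε t₀))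
      (fun t₀ ht₀ => Metric.ball_mem_nhds _ (hε t₀ ht₀))
    have hVint : (⋂ x ∈ T, V (x : ↥C).1) ∈ F :=
      (Filter.biInter_finset_mem T).mpr fun x hx => hVF x.1 x.2
    apply Filter.mem_of_superset (Filter.inter_mem h𝒦F hVint)
    rintro X ⟨hXK, hXV⟩
    have hint := hKmem hXK
    refine ⟨fun t htC => K_dom2 hstd hUn hSU hSU6 hint.1 hint.2 (hC2' t htC),
      fun t htC => ?_⟩
    obtain ⟨x, hxT, htball⟩ := Set.mem_iUnion₂.mp (hTcov htC)
    have hxV : X ∈ V x.1 := Set.mem_iInter₂.mp hXV x hxT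
    apply hVp x.1 x.2 X hxV hXK t htC
    rw [← Real.dist_eq]
    exact htball
  -- PART 2 : neighborhood of O
  have hnbhd : 𝒦 ∈ 𝓝 (⟦constOnePS L⟧ : LGQuot L) := by
    set B₀ : Set (LGQuot L) := {X : LGQuot L | Set.Icc (-1:ℝ) 1 ⊆ germDomain L X ∧
      ∀ t ∈ Set.Icc (-1:ℝ) 1, germEval L X t ∈ interior SU} with hB₀def
    have hB₀SBB : B₀ ∈ SBB L := by
      refine ⟨Set.Icc (-1:ℝ) 1, interior SU, isCompact_Icc, ?_, isOpen_interior, rfl⟩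
      rintro t ⟨h1, h2⟩
      exact ⟨by linarith, by linarith⟩
    have hOB : (⟦constOnePS L⟧ : LGQuot L) ∈ B₀ := by
      constructor
      · intro t _
        exact ⟨constOnePS L, rfl, ENNReal.ofReal_lt_top⟩
      · intro t _
        rw [germEval_const]
        exact mem_interior_iff_mem_nhds.mpr hSU.2.1
    have hB₀K : B₀ ⊆ 𝒦 := by
      intro X hX
      rw [h𝒦]
      exact ⟨hX.1, fun t ht => interior_subset (hX.2 t ht)⟩
    exact mem_nhds_iff.mpr ⟨B₀, hB₀K, isOpen_SBB hB₀SBB, hOB⟩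
  -- PART 3 : bijectivity
  have hbij : Set.BijOn (fun X => germEval L X 1) 𝒦 K := by
    refine ⟨?_, ?_, ?_⟩
    · intro X hX
      rw [hK]
      exact ⟨X, hX, rfl⟩
    · intro X hX Y hY hE
      exact K_inj hstd hUn hSU hSU6 (hKmem hX).1 (hKmem hX).2 (hKmem hY).1 (hKmem hY).2 hE
    · rw [hK]
      exact Set.surjOn_image _ _
  -- PART 4 : homeomorphism
  refine ⟨hcomp, hnbhd, hbij, ?_⟩
  haveI : CompactSpace ↥𝒦 := isCompact_iff_compactSpace.mp hcomp
  have hcont1 : Continuous fun x : ↥𝒦 => germEval L (↑x : LGQuot L) 1 := by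
    rw [continuous_def]
    intro U hU
    have hBopen : IsOpen {X : LGQuot L | {(1:ℝ)} ⊆ germDomain L X ∧
        ∀ t ∈ ({(1:ℝ)} : Set ℝ), germEval L X t ∈ U} := by
      apply isOpen_SBB
      refine ⟨{(1:ℝ)}, U, isCompact_singleton, ?_, hU, rfl⟩
      rintro t rfl
      constructor <;> norm_num
    have heq : (fun x : ↥𝒦 => germEval L (↑x : LGQuot L) 1) ⁻¹' U =
        Subtype.val ⁻¹' {X : LGQuot L | {(1:ℝ)} ⊆ germDomain L X ∧
          ∀ t ∈ ({(1:ℝ)} : Set ℝ), germEval L X t ∈ U} := by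
      ext x
      simp only [Set.mem_preimage, Set.mem_setOf_eq, Set.singleton_subset_iff,
        Set.mem_singleton_iff]
      constructor
      · intro h
        refine ⟨K_dom2 hstd hUn hSU hSU6 (hKmem x.2).1 (hKmem x.2).2 (by norm_num), ?_⟩
        rintro t rfl
        exact h
      · rintro ⟨_, h⟩
        exact h 1 rfl
    rw [heq]
    exact hBopen.preimage continuous_subtype_val
  let e0 : ↥𝒦 ≃ ↥K := Set.BijOn.equiv _ hbij
  have hce : Continuous e0 := by
    apply Continuous.subtype_mk hcont1
  exact ⟨hce.homeoOfEquivCompactToT2, fun x => rfl⟩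
/-- `𝒦` is a compact neighborhood of `O` in `L(G)` and the local exponential
map `E : 𝒦 → K` is a bijection and a homeomorphism onto `K`. -/
theorem statement_5 {G : Type*} [TopologicalSpace G] [T2Space G] [LocallyCompactSpace G]
    (L : LocalGroup G) (hstd : L.Std) (Un : ℕ → Set G) (hUn : L.IsProdChain Un)
    (hNSS : L.NSS) (SU : Set G) (hSU : L.IsSpecialNbhd Un SU) (hSU6 : SU ⊆ Un 6)
    (𝒦 : Set (LGQuot L))
    (h𝒦 : 𝒦 = {X : LGQuot L | Set.Icc (-1 : ℝ) 1 ⊆ germDomain L X ∧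
      ∀ t ∈ Set.Icc (-1 : ℝ) 1, germEval L X t ∈ SU})
    (K : Set G) (hK : K = (fun X => germEval L X 1) '' 𝒦) :
    IsCompact 𝒦 ∧ 𝒦 ∈ 𝓝 (⟦constOnePS L⟧ : LGQuot L) ∧
      Set.BijOn (fun X => germEval L X 1) 𝒦 K ∧
      ∃ e : ↥𝒦 ≃ₜ ↥K, ∀ x : ↥𝒦, (e x : G) = germEval L (↑x : LGQuot L) 1 := by
  exact statement_5' L hstd Un hUn hNSS SU hSU hSU6 𝒦 h𝒦 K hK
end

section
/- Let G be a locally compact NSS local group. Then there is a neighborhood V of 1 with V ⊆ U₂ such that for all x,y ∈ V, if x² = y² then x = y (note x² and y² are defined since V ⊆ U₂). -/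
open scoped Topology Manifold ENNReal

open LocalGroup

open LocalGroup Filter Set Topology

namespace LocalGroup
variable {G : Type*} [TopologicalSpace G] {L : LocalGroup G}

def npow (L : LocalGroup G) (a : G) : ℕ → G
  | 0 => L.one
  | n + 1 => L.mul (L.npow a n) a

lemma lam (hstd : L.Std) (x : G) : x ∈ L.Lambda := hstd.1 ▸ Set.mem_univ x

lemma inv_one : L.inv L.one = L.one := by
  have h1 := L.mul_inv_self L.one L.one_mem_Lambda
  have h2 := L.one_mul (L.inv L.one)
  rw [h2] at h1; exact h1


lemma inv_invol (hstd : L.Std) (a : G) : L.inv (L.inv a) = a := by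
  have h := L.assoc (L.inv (L.inv a)) (L.inv a) a
    (L.mem_inv_left (L.inv a) (lam hstd _)) (L.mem_inv_left a (lam hstd _)) ?_ ?_
  · rw [L.inv_mul_self (L.inv a) (lam hstd _), L.inv_mul_self a (lam hstd _),
      L.one_mul, L.mul_one] at h
    exact h.symm
  · rw [L.inv_mul_self (L.inv a) (lam hstd _)]; exact L.pair_one_left a
  · rw [L.inv_mul_self a (lam hstd _)]; exact L.pair_one_right _

lemma mul_inv_cancel_right (hstd : L.Std) {x a : G} (h1 : (x, a) ∈ L.Omega)
    (h2 : (L.mul x a, L.inv a) ∈ L.Omega) : L.mul (L.mul x a) (L.inv a) = x := by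
  have h := L.assoc x a (L.inv a) h1 (L.mem_inv_right a (lam hstd _)) h2 ?_
  · rw [L.mul_inv_self a (lam hstd _), L.mul_one] at h; exact h
  · rw [L.mul_inv_self a (lam hstd _)]; exact L.pair_one_right _

lemma inv_mul_cancel_left (hstd : L.Std) {a x : G} (h1 : (a, x) ∈ L.Omega)
    (h2 : (L.inv a, L.mul a x) ∈ L.Omega) : L.mul (L.inv a) (L.mul a x) = x := by
  have h := L.assoc (L.inv a) a x (L.mem_inv_left a (lam hstd _)) h1 ?_ h2
  · rw [L.inv_mul_self a (lam hstd _), L.one_mul] at h; exact h.symm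
  · rw [L.inv_mul_self a (lam hstd _)]; exact L.pair_one_left _

lemma npow_one' (a : G) : L.npow a 1 = a := by
  show L.mul (L.npow a 0) a = a
  show L.mul L.one a = a
  exact L.one_mul a

section U2
variable {U2 : Set G} (hstd : L.Std)
  (hΩ : ∀ u ∈ U2, ∀ v ∈ U2, (u, v) ∈ L.Omega)
  (hsym : ∀ u ∈ U2, L.inv u ∈ U2)

include hstd hΩ hsym

lemma npow_succ' {a : G} (ha : a ∈ U2) :
    ∀ m, (∀ j ≤ m, L.npow a j ∈ U2) → L.mul a (L.npow a m) = L.npow a (m + 1) := by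
  intro m
  induction m with
  | zero => intro _; show L.mul a L.one = L.npow a 1; rw [L.mul_one, npow_one']
  | succ n ih =>
    intro hm
    have hmn : ∀ j ≤ n, L.npow a j ∈ U2 := fun j hj => hm j (hj.trans (Nat.le_succ n))
    have ihn := ih hmn
    have hpn : L.npow a n ∈ U2 := hm n (Nat.le_succ n)
    have hpn1 : L.npow a (n + 1) ∈ U2 := hm (n + 1) le_rfl
    have hA := L.assoc a (L.npow a n) a (hΩ a ha _ hpn) (hΩ _ hpn a ha)
      (by rw [ihn]; exact hΩ _ hpn1 a ha) (by exact hΩ a ha _ hpn1)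
    show L.mul a (L.mul (L.npow a n) a) = L.mul (L.npow a (n + 1)) a
    rw [← hA, ihn]

lemma inv_npow {a : G} (ha : a ∈ U2) :
    ∀ m, (∀ j ≤ m, L.npow a j ∈ U2) → ∀ j ≤ m,
      L.inv (L.npow a j) = L.npow (L.inv a) j ∧ L.npow (L.inv a) j ∈ U2 := by
  intro m
  induction m with
  | zero =>
    intro hm j hj
    interval_cases j
    have h0 : L.npow a 0 = L.one := rfl
    refine ⟨?_, ?_⟩
    · show L.inv (L.npow a 0) = L.one
      rw [h0, inv_one]
    · show L.one ∈ U2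
      rw [← h0]; exact hm 0 le_rfl
  | succ n ih =>
    intro hm j hj
    have hmn : ∀ i ≤ n, L.npow a i ∈ U2 := fun i hi => hm i (hi.trans (Nat.le_succ n))
    have hq := ih hmn
    rcases Nat.lt_succ_iff_lt_or_eq.mp (Nat.lt_succ_of_le hj) with h | h
    · exact hq j (Nat.lt_succ_iff.mp h)
    · subst h
      have hpn : L.npow a n ∈ U2 := hmn n le_rfl
      have heq : L.inv (L.npow a (n + 1)) = L.npow (L.inv a) (n + 1) := by
        show L.inv (L.mul (L.npow a n) a) = _
        rw [(hstd.2 _ _ (hΩ _ hpn a ha)).2, (hq n le_rfl).1]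
        exact npow_succ' hstd hΩ hsym (hsym a ha) n (fun i hi => (hq i hi).2)
      exact ⟨heq, heq ▸ hsym _ (hm (n + 1) le_rfl)⟩

lemma npow_add {a : G} (ha : a ∈ U2) :
    ∀ m n, (∀ j ≤ m + n, L.npow a j ∈ U2) →
      L.mul (L.npow a m) (L.npow a n) = L.npow a (m + n) := by
  intro m n
  induction n with
  | zero => intro _; exact L.mul_one _
  | succ n ih =>
    intro hm
    have hmn : ∀ j ≤ m + n, L.npow a j ∈ U2 := fun j hj => hm j (hj.trans (Nat.le_succ _))
    have ihn := ih hmn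
    have hpm : L.npow a m ∈ U2 := hmn m (Nat.le_add_right m n)
    have hpn : L.npow a n ∈ U2 := hmn n (Nat.le_add_left n m)
    have hpmn : L.npow a (m + n) ∈ U2 := hmn _ le_rfl
    have hpn1 : L.npow a (n + 1) ∈ U2 := hm (n + 1) (by omega)
    have hA := L.assoc (L.npow a m) (L.npow a n) a (hΩ _ hpm _ hpn) (hΩ _ hpn a ha)
      (by rw [ihn]; exact hΩ _ hpmn a ha) (by exact hΩ _ hpm _ hpn1)
    show L.mul (L.npow a m) (L.mul (L.npow a n) a) = L.npow a (m + n + 1)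
    rw [← hA, ihn]; rfl

lemma npow_mul_npow_inv {a : G} (ha : a ∈ U2)
    (hall : ∀ j, L.npow a j ∈ U2) :
    ∀ n m, L.mul (L.npow a m) (L.npow (L.inv a) n) =
      if n ≤ m then L.npow a (m - n) else L.npow (L.inv a) (n - m) := by
  have hall' : ∀ j, L.npow (L.inv a) j ∈ U2 := fun j =>
    (inv_npow hstd hΩ hsym ha j (fun i _ => hall i) j le_rfl).2
  have hia : L.inv a ∈ U2 := hsym a ha
  intro n
  induction n with
  | zero =>
    intro m
    simp only [Nat.zero_le, if_true, Nat.sub_zero]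
    exact L.mul_one _
  | succ n ih =>
    intro m
    match m with
    | 0 =>
      simp only [Nat.not_succ_le_zero, if_false, Nat.sub_zero]
      exact L.one_mul _
    | Nat.succ m =>
      have hstep : L.mul (L.npow a (m + 1)) (L.npow (L.inv a) (n + 1)) =
          L.mul (L.npow a m) (L.npow (L.inv a) n) := by
        have hq1 : L.mul (L.inv a) (L.npow (L.inv a) n) = L.npow (L.inv a) (n + 1) :=
          npow_succ' hstd hΩ hsym hia n (fun i _ => hall' i)
        have haq : L.mul a (L.npow (L.inv a) (n + 1)) = L.npow (L.inv a) n := by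
          rw [← hq1]
          have hA := L.assoc a (L.inv a) (L.npow (L.inv a) n)
            (L.mem_inv_right a (lam hstd a)) (hΩ _ hia _ (hall' n))
            (by rw [L.mul_inv_self a (lam hstd a)]; exact L.pair_one_left _)
            (by rw [hq1]; exact hΩ a ha _ (hall' (n + 1)))
          rw [← hA, L.mul_inv_self a (lam hstd a), L.one_mul]
        have hB := L.assoc (L.npow a m) a (L.npow (L.inv a) (n + 1))
          (hΩ _ (hall m) a ha) (hΩ a ha _ (hall' (n + 1)))
          (hΩ _ (hall (m + 1)) _ (hall' (n + 1)))
          (by rw [haq]; exact hΩ _ (hall m) _ (hall' n))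
        show L.mul (L.mul (L.npow a m) a) (L.npow (L.inv a) (n + 1)) = _
        rw [hB, haq]
      rw [hstep, ih m]
      by_cases h : n ≤ m
      · rw [if_pos h, if_pos (by omega)]
        congr 1; omega
      · rw [if_neg h, if_neg (by omega)]
        congr 1; omega


lemma escape {K : Set G} (hKU2 : K ⊆ U2) (hKcl : IsClosed K)
    (hKsym : ∀ k ∈ K, L.inv k ∈ K)
    (hKsub : ∀ H : Set G, L.IsSubgroup H → H ⊆ K → H = {L.one})
    (hinvc : Continuous L.inv)
    {a : G} (hall : ∀ n, L.npow a n ∈ K) : a = L.one := by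
  have ha2 : a ∈ U2 := hKU2 (by have := hall 1; rwa [npow_one'] at this)
  have hiq : L.inv (L.inv a) = a := inv_invol hstd a
  have hia2 : L.inv a ∈ U2 := hsym a ha2
  have hall2 : ∀ n, L.npow a n ∈ U2 := fun n => hKU2 (hall n)
  have hinvp : ∀ n, L.inv (L.npow a n) = L.npow (L.inv a) n ∧ L.npow (L.inv a) n ∈ U2 :=
    fun n => inv_npow hstd hΩ hsym ha2 n (fun i _ => hall2 i) n le_rfl
  have hallK' : ∀ n, L.npow (L.inv a) n ∈ K := fun n => by
    rw [← (hinvp n).1]; exact hKsym _ (hall n)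
  have hall2' : ∀ n, L.npow (L.inv a) n ∈ U2 := fun n => hKU2 (hallK' n)
  set S0 : Set G := (Set.range (L.npow a)) ∪ (Set.range (L.npow (L.inv a))) with hS0
  have hS0K : S0 ⊆ K := by rintro x (⟨n, rfl⟩ | ⟨n, rfl⟩); exacts [hall n, hallK' n]
  have hHK : closure S0 ⊆ K := closure_minimal hS0K hKcl
  have hSmul : ∀ x ∈ S0, ∀ y ∈ S0, L.mul x y ∈ S0 := by
    rintro x (⟨m, rfl⟩ | ⟨m, rfl⟩) y (⟨n, rfl⟩ | ⟨n, rfl⟩)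
    · rw [npow_add hstd hΩ hsym ha2 m n (fun j _ => hall2 j)]; exact Or.inl ⟨m + n, rfl⟩
    · rw [npow_mul_npow_inv hstd hΩ hsym ha2 hall2 n m]
      split
      · exact Or.inl ⟨_, rfl⟩
      · exact Or.inr ⟨_, rfl⟩
    · have h := npow_mul_npow_inv hstd hΩ hsym hia2 hall2' n m
      rw [hiq] at h
      rw [h]
      split
      · exact Or.inr ⟨_, rfl⟩
      · exact Or.inl ⟨_, rfl⟩
    · rw [npow_add hstd hΩ hsym hia2 m n (fun j _ => hall2' j)]; exact Or.inr ⟨_, rfl⟩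
  have hSinv : L.inv '' S0 ⊆ S0 := by
    rintro - ⟨x, hx, rfl⟩
    rcases hx with ⟨n, rfl⟩ | ⟨n, rfl⟩
    · rw [(hinvp n).1]; exact Or.inr ⟨n, rfl⟩
    · have h := (inv_npow hstd hΩ hsym hia2 n (fun i _ => hall2' i) n le_rfl).1
      rw [hiq] at h
      rw [h]; exact Or.inl ⟨n, rfl⟩
  have hsubgrp : L.IsSubgroup (closure S0) := by
    refine ⟨subset_closure (Or.inl ⟨0, rfl⟩), fun x _ => lam hstd x, ?_, ?_, ?_⟩
    · intro x hx y hy; exact hΩ x (hKU2 (hHK hx)) y (hKU2 (hHK hy))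
    · intro x hx
      have h1 : L.inv x ∈ L.inv '' closure S0 := Set.mem_image_of_mem _ hx
      have h2 : L.inv '' closure S0 ⊆ closure (L.inv '' S0) :=
        image_closure_subset_closure_image hinvc
      exact closure_mono hSinv (h2 h1)
    · intro x hx y hy
      have hcl : closure (S0 ×ˢ S0) = closure S0 ×ˢ closure S0 := closure_prod_eq
      have hsubΩ : closure (S0 ×ˢ S0) ⊆ L.Omega := by
        rw [hcl]; rintro ⟨u, v⟩ ⟨hu, hv⟩
        exact hΩ u (hKU2 (hHK hu)) v (hKU2 (hHK hv))
      have hmc : ContinuousOn (fun q : G × G => L.mul q.1 q.2) (closure (S0 ×ˢ S0)) :=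
        L.continuousOn_mul.mono hsubΩ
      have himg : (fun q : G × G => L.mul q.1 q.2) '' closure (S0 ×ˢ S0) ⊆
          closure ((fun q : G × G => L.mul q.1 q.2) '' (S0 ×ˢ S0)) := hmc.image_closure
      have hin : (x, y) ∈ closure (S0 ×ˢ S0) := by rw [hcl]; exact ⟨hx, hy⟩
      refine closure_mono ?_ (himg (Set.mem_image_of_mem _ hin))
      rintro - ⟨⟨u, v⟩, ⟨hu, hv⟩, rfl⟩
      exact hSmul u hu v hv
  have hHone := hKsub _ hsubgrp hHK
  have haH : a ∈ closure S0 := subset_closure (Or.inl ⟨1, npow_one' a⟩)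
  rw [hHone] at haH
  exact haH

lemma conj_rel {K : Set G} (hKU2 : K ⊆ U2) (hKsym : ∀ k ∈ K, L.inv k ∈ K)
    {x a : G} (hx2 : x ∈ U2) (hKx : ∀ k ∈ K, L.mul k x ∈ U2) (ha : a ∈ K)
    (hxa2 : L.mul x a ∈ U2) (hrel : L.mul x a = L.mul (L.inv a) x)
    {M : ℕ} (hpows : ∀ j ≤ M, L.npow a j ∈ K) :
    ∀ m ≤ M, L.mul x (L.npow a m) = L.mul (L.npow (L.inv a) m) x := by
  have ha2 : a ∈ U2 := hKU2 ha
  have hq := inv_npow hstd hΩ hsym ha2 M (fun i hi => hKU2 (hpows i hi))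
  have hqK : ∀ j ≤ M, L.npow (L.inv a) j ∈ K := fun j hj => by
    rw [← (hq j hj).1]; exact hKsym _ (hpows j hj)
  intro m
  induction m with
  | zero => intro _; show L.mul x L.one = L.mul L.one x; rw [L.mul_one, L.one_mul]
  | succ n ih =>
    intro hn
    have hn' : n ≤ M := (Nat.le_succ n).trans hn
    have ihn := ih hn'
    have hpn : L.npow a n ∈ U2 := hKU2 (hpows n hn')
    have hpn1 : L.npow a (n + 1) ∈ U2 := hKU2 (hpows _ hn)
    have hqn2 : L.npow (L.inv a) n ∈ U2 := (hq n hn').2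
    have hqn1 : L.npow (L.inv a) (n + 1) ∈ U2 := (hq _ hn).2
    have hqx2 : L.mul (L.npow (L.inv a) n) x ∈ U2 := hKx _ (hqK n hn')
    have hA1 := L.assoc x (L.npow a n) a (hΩ x hx2 _ hpn) (hΩ _ hpn a ha2)
      (by rw [ihn]; exact hΩ _ hqx2 a ha2) (hΩ x hx2 _ hpn1)
    have hA2 := L.assoc (L.npow (L.inv a) n) x a (hΩ _ hqn2 x hx2) (hΩ x hx2 a ha2)
      (hΩ _ hqx2 a ha2) (hΩ _ hqn2 _ hxa2)
    have hA3 := L.assoc (L.npow (L.inv a) n) (L.inv a) x (hΩ _ hqn2 _ (hsym a ha2))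
      (hΩ _ (hsym a ha2) x hx2) (by exact hΩ _ hqn1 x hx2)
      (by rw [← hrel]; exact hΩ _ hqn2 _ hxa2)
    show L.mul x (L.mul (L.npow a n) a) = L.mul (L.npow (L.inv a) (n + 1)) x
    rw [← hA1, ihn, hA2, hrel, ← hA3]
    rfl

lemma base_rel {x y : G} (hx2 : x ∈ U2) (hy2 : y ∈ U2)
    (hxx2 : L.mul x x ∈ U2) (ha2 : L.mul (L.inv x) y ∈ U2)
    (hsq : L.mul x x = L.mul y y) :
    y = L.mul x (L.mul (L.inv x) y) ∧
      L.mul x (L.mul (L.inv x) y) =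
        L.mul (L.inv (L.mul (L.inv x) y)) x := by
  have hix2 : L.inv x ∈ U2 := hsym x hx2
  have h1 : L.mul x (L.mul (L.inv x) y) = y := by
    have hA := L.assoc x (L.inv x) y (L.mem_inv_right x (lam hstd x)) (hΩ _ hix2 y hy2)
      (by rw [L.mul_inv_self x (lam hstd x)]; exact L.pair_one_left y) (hΩ x hx2 _ ha2)
    rw [← hA, L.mul_inv_self x (lam hstd x), L.one_mul]
  have h2 : L.mul (L.mul (L.inv x) y) y = x := by
    have hB := inv_mul_cancel_left hstd (hΩ x hx2 x hx2) (hΩ _ hix2 _ hxx2)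
    have hC := L.assoc (L.inv x) y y (hΩ _ hix2 y hy2) (hΩ y hy2 y hy2)
      (hΩ _ ha2 y hy2) (by rw [← hsq]; exact hΩ _ hix2 _ hxx2)
    rw [hC, ← hsq, hB]
  have h3 : L.mul (L.inv (L.mul (L.inv x) y)) x = y := by
    have hD := inv_mul_cancel_left hstd (hΩ _ ha2 y hy2)
      (by rw [h2]; exact hΩ _ (hsym _ ha2) x hx2)
    rw [h2] at hD
    exact hD
  exact ⟨h1.symm, h1.trans h3.symm⟩

end U2

lemma tendsto_mul' (L : LocalGroup G) {α : Type*} {F : Filter α} {f g : α → G} {u v : G}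
    (huv : (u, v) ∈ L.Omega) (hf : Filter.Tendsto f F (𝓝 u)) (hg : Filter.Tendsto g F (𝓝 v)) :
    Filter.Tendsto (fun p => L.mul (f p) (g p)) F (𝓝 (L.mul u v)) := by
  have hc : ContinuousAt (fun q : G × G => L.mul q.1 q.2) (u, v) :=
    L.continuousOn_mul.continuousAt (L.isOpen_Omega.mem_nhds huv)
  exact hc.tendsto.comp (hf.prodMk_nhds hg)

lemma tendsto_npow (L : LocalGroup G) (j : ℕ) :
    Filter.Tendsto (fun a => L.npow a j) (𝓝 L.one) (𝓝 L.one) := by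
  induction j with
  | zero => exact tendsto_const_nhds
  | succ n ih =>
    have h := tendsto_mul' L (L.pair_one_left L.one) ih tendsto_id
    rw [L.one_mul] at h
    exact h

end LocalGroup

open LocalGroup Filter


/-- a locally compact NSS local group has a neighborhood of `1` inside `U₂`
on which squaring is injective. -/
theorem statement_6 {G : Type*} [TopologicalSpace G] [T2Space G] [LocallyCompactSpace G]
    (L : LocalGroup G) (hstd : L.Std) (Un : ℕ → Set G) (hUn : L.IsProdChain Un)
    (hNSS : L.NSS) :
    ∃ V ∈ 𝓝 L.one, V ⊆ Un 2 ∧ ∀ x ∈ V, ∀ y ∈ V, L.mul x x = L.mul y y → x = y := by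
  classical
  by_contra hcon
  push_neg at hcon
  obtain ⟨hU2open, h1U2, hU2symm, -, hprod2⟩ := hUn 2 (by norm_num)
  have hsym : ∀ u ∈ Un 2, L.inv u ∈ Un 2 := fun u hu => by
    rw [← hU2symm.2]; exact Set.mem_image_of_mem _ hu
  have hΩ : ∀ u ∈ Un 2, ∀ v ∈ Un 2, (u, v) ∈ L.Omega := by
    intro u hu v hv
    obtain ⟨b, hb⟩ := hprod2 [u, v] rfl
      (by intro a ha; simp only [List.mem_cons, List.not_mem_nil, or_false] at ha
          rcases ha with rfl | rfl; exacts [hu, hv])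
    rw [LocalGroup.Represents] at hb
    obtain ⟨b1, b2, hb1, hb2, hO, -⟩ := hb 1 le_rfl (by norm_num)
    simp only [List.take, List.drop, LocalGroup.Represents] at hb1 hb2
    subst hb1; subst hb2; exact hO
  have hinvc : Continuous L.inv := by
    rw [← continuousOn_univ, ← hstd.1]; exact L.continuousOn_inv
  obtain ⟨U0, hU0n, hU0⟩ := hNSS
  obtain ⟨K0, hK0n, hK0sub, hK0c⟩ := local_compact_nhds (x := L.one)
    (Filter.inter_mem hU0n (hU2open.mem_nhds h1U2))
  set K : Set G := K0 ∩ L.inv ⁻¹' K0 with hKdef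
  have hKc : IsCompact K := hK0c.inter_right (IsClosed.preimage hinvc hK0c.isClosed)
  have hKn : K ∈ 𝓝 L.one := Filter.inter_mem hK0n
    (hinvc.continuousAt.preimage_mem_nhds (by rwa [LocalGroup.inv_one]))
  have hKU2 : K ⊆ Un 2 := fun k hk => (hK0sub hk.1).2
  have hKU0 : K ⊆ U0 := fun k hk => (hK0sub hk.1).1
  have hKsym : ∀ k ∈ K, L.inv k ∈ K := fun k hk =>
    ⟨hk.2, by simp only [Set.mem_preimage]; rw [inv_invol hstd]; exact hk.1⟩
  have hKcl : IsClosed K := hKc.isClosed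
  have h1K : L.one ∈ K := mem_of_mem_nhds hKn
  -- tube lemmas
  have hΦopen : IsOpen (L.Omega ∩ (fun q : G × G => L.mul q.1 q.2) ⁻¹' (Un 2)) :=
    L.continuousOn_mul.isOpen_inter_preimage L.isOpen_Omega hU2open
  obtain ⟨W1, O1, hW1o, -, hW1mem, hKO1, hsub1⟩ :=
    generalized_tube_lemma isCompact_singleton hKc hΦopen
      (by rintro ⟨w, k⟩ ⟨hw, hk⟩
          simp only [Set.mem_singleton_iff] at hw; subst hw
          exact ⟨L.pair_one_left k, by simp only [Set.mem_preimage]; rw [L.one_mul]; exact hKU2 hk⟩)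
  obtain ⟨O2, W2, -, hW2o, hKO2, hW2mem, hsub2⟩ :=
    generalized_tube_lemma hKc isCompact_singleton hΦopen
      (by rintro ⟨k, w⟩ ⟨hk, hw⟩
          simp only [Set.mem_singleton_iff] at hw; subst hw
          exact ⟨L.pair_one_right k, by simp only [Set.mem_preimage]; rw [L.mul_one]; exact hKU2 hk⟩)
  have h1W1 : L.one ∈ W1 := hW1mem rfl
  have h1W2 : L.one ∈ W2 := hW2mem rfl
  have tube1 : ∀ w ∈ W1, ∀ k ∈ K, L.mul w k ∈ Un 2 := fun w hw k hk =>
    (hsub1 (Set.mk_mem_prod hw (hKO1 hk))).2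
  have tube2 : ∀ k ∈ K, ∀ w ∈ W2, L.mul k w ∈ Un 2 := fun k hk w hw =>
    (hsub2 (Set.mk_mem_prod (hKO2 hk) hw)).2
  -- escape times
  have hKsub' : ∀ H : Set G, L.IsSubgroup H → H ⊆ K → H = {L.one} :=
    fun H h1 h2 => hU0 H h1 (h2.trans hKU0)
  have hesc : ∀ a : G, a ≠ L.one → ∃ n, L.npow a (n + 1) ∉ K := by
    intro a hane
    by_contra hno
    push_neg at hno
    refine hane (escape hstd hΩ hsym hKU2 hKcl hKsym hKsub' hinvc ?_)
    intro n
    cases n with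
    | zero => exact h1K
    | succ i => exact hno i
  set N : G → ℕ := fun a => if h : ∃ n, L.npow a (n + 1) ∉ K then Nat.find h else 0 with hNdef
  have hNspec : ∀ a : G, a ≠ L.one →
      (L.npow a (N a + 1) ∉ K) ∧ ∀ j ≤ N a, L.npow a j ∈ K := by
    intro a ha
    have h := hesc a ha
    constructor
    · simp only [hNdef, dif_pos h]; exact Nat.find_spec h
    · intro j hj
      cases j with
      | zero => exact h1K
      | succ i =>
        simp only [hNdef, dif_pos h] at hj
        by_contra hni
        exact absurd hni (by simpa using Nat.find_min h (by omega))
  have hNlargeAux : ∀ M : ℕ, ∀ᶠ a in 𝓝 L.one, ∀ j ≤ M, L.npow a j ∈ K := by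
    intro M
    induction M with
    | zero =>
      refine Filter.Eventually.of_forall fun a j hj => ?_
      interval_cases j; exact h1K
    | succ n ih =>
      have h2 : ∀ᶠ a in 𝓝 L.one, L.npow a (n + 1) ∈ K := tendsto_npow L (n + 1) hKn
      filter_upwards [ih, h2] with a ha1 ha2 j hj
      rcases Nat.lt_succ_iff_lt_or_eq.mp (Nat.lt_succ_of_le hj) with h | h
      · exact ha1 j (Nat.lt_succ_iff.mp h)
      · subst h; exact ha2
  have hNlarge : ∀ m : ℕ, ∀ᶠ a in 𝓝 L.one, a ≠ L.one → m ≤ N a := by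
    intro m
    filter_upwards [hNlargeAux (m + 1)] with a ha hane
    by_contra hlt
    push_neg at hlt
    exact (hNspec a hane).1 (ha _ (by omega))
  -- the filter of counterexamples
  set S : Set (G × G) := {p | L.mul p.1 p.1 = L.mul p.2 p.2 ∧ p.1 ≠ p.2} with hSdef
  set F0 : Filter (G × G) := (𝓝 L.one ×ˢ 𝓝 L.one) ⊓ 𝓟 S with hF0
  have hF0ne : F0.NeBot := by
    rw [hF0, Filter.inf_principal_neBot_iff]
    intro U hU
    obtain ⟨A, hA, B, hB, hAB⟩ := Filter.mem_prod_iff.mp hU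
    obtain ⟨x, hx, y, hy, hxy, hne⟩ := hcon (A ∩ B ∩ Un 2)
      (Filter.inter_mem (Filter.inter_mem hA hB) (hU2open.mem_nhds h1U2))
      (fun z hz => hz.2)
    exact ⟨(x, y), hAB (Set.mk_mem_prod hx.1.1 hy.1.2), hxy, hne⟩
  have htx : Tendsto (fun p : G × G => p.1) F0 (𝓝 L.one) := tendsto_fst.mono_left inf_le_left
  have hty : Tendsto (fun p : G × G => p.2) F0 (𝓝 L.one) := tendsto_snd.mono_left inf_le_left
  have htix : Tendsto (fun p : G × G => L.inv p.1) F0 (𝓝 L.one) := by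
    have h := (hinvc.tendsto L.one).comp htx
    rwa [LocalGroup.inv_one] at h
  set af : G × G → G := fun p => L.mul (L.inv p.1) p.2 with hafdef
  have hta : Tendsto af F0 (𝓝 L.one) := by
    have h := tendsto_mul' L (L.pair_one_left L.one) htix hty
    rwa [L.one_mul] at h
  set Nf : G × G → ℕ := fun p => N (af p) with hNfdef
  have hSmem : ∀ᶠ p in F0, p ∈ S := by
    rw [hF0]
    exact Filter.eventually_inf_principal.mpr (Filter.Eventually.of_forall fun p hp => hp)
  -- the big pointwise package
  have hgood : ∀ᶠ p in F0,
      af p ∈ K ∧ af p ≠ L.one ∧ (∀ j ≤ Nf p, L.npow (af p) j ∈ K) ∧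
        L.npow (af p) (Nf p + 1) ∉ K ∧
        (∀ j ≤ Nf p, L.inv (L.npow (af p) j) = L.npow (L.inv (af p)) j) ∧
        (∀ m ≤ Nf p, L.mul p.1 (L.npow (af p) m) = L.mul (L.npow (L.inv (af p)) m) p.1) := by
    filter_upwards [hSmem, htx.eventually_mem (Filter.inter_mem ((hW1o.inter hW2o).mem_nhds ⟨h1W1, h1W2⟩) hKn),
      htx.eventually_mem (hU2open.mem_nhds h1U2), hty.eventually_mem (hU2open.mem_nhds h1U2),
      hta.eventually_mem hKn] with p hpS hxWK hxU2 hyU2 haK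
    have hxx2 : L.mul p.1 p.1 ∈ Un 2 := tube1 p.1 hxWK.1.1 p.1 hxWK.2
    have ha2 : af p ∈ Un 2 := hKU2 haK
    obtain ⟨hy_eq, hrel⟩ := base_rel hstd hΩ hsym hxU2 hyU2 hxx2 ha2 hpS.1
    have hane : af p ≠ L.one := by
      intro h
      apply hpS.2
      rw [hy_eq]
      simp only [hafdef] at h
      rw [h, L.mul_one]
    have hNs := hNspec (af p) hane
    have hinvp : ∀ j ≤ Nf p, L.inv (L.npow (af p) j) = L.npow (L.inv (af p)) j := fun j hj =>
      (inv_npow hstd hΩ hsym ha2 (Nf p) (fun i hi => hKU2 (hNs.2 i hi)) j hj).1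
    have hKx : ∀ k ∈ K, L.mul k p.1 ∈ Un 2 := fun k hk => tube2 k hk p.1 hxWK.1.2
    have hxa2 : L.mul p.1 (af p) ∈ Un 2 := tube1 p.1 hxWK.1.1 _ haK
    have hconj := conj_rel hstd hΩ hsym hKU2 hKsym hxU2 hKx haK hxa2 hrel hNs.2
    exact ⟨haK, hane, hNs.2, hNs.1, hinvp, hconj⟩
  have hNtop : Tendsto Nf F0 atTop := by
    rw [tendsto_atTop]
    intro m
    filter_upwards [hgood, hta.eventually (hNlarge m)] with p hp hm
    exact hm hp.2.1
  -- first cluster point b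
  set f : G × G → G := fun p => L.npow (af p) (Nf p) with hfdef
  have hfK : ∀ᶠ p in F0, f p ∈ K := by
    filter_upwards [hgood] with p hp; exact hp.2.2.1 _ le_rfl
  obtain ⟨b, hbK, hbcl⟩ := hKc (f := Filter.map f F0) (Filter.le_principal_iff.mpr hfK)
  have hF1ne : (F0 ⊓ Filter.comap f (𝓝 b)).NeBot := by
    rw [← Filter.map_neBot_iff f, Filter.push_pull]
    exact (inf_comm (𝓝 b) (Filter.map f F0)) ▸ hbcl
  set F1 : Filter (G × G) := F0 ⊓ Filter.comap f (𝓝 b) with hF1def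
  have htf : Tendsto f F1 (𝓝 b) := tendsto_iff_comap.mpr inf_le_right
  -- second cluster point c
  set g : G × G → G := fun p => L.npow (af p) (Nf p / 2) with hgdef
  have hgK : ∀ᶠ p in F1, g p ∈ K := by
    filter_upwards [hgood.filter_mono inf_le_left] with p hp
    exact hp.2.2.1 _ (Nat.div_le_self _ _)
  haveI := hF1ne
  obtain ⟨c, hcK, hccl⟩ := hKc (f := Filter.map g F1) (Filter.le_principal_iff.mpr hgK)
  have hF2ne : (F1 ⊓ Filter.comap g (𝓝 c)).NeBot := by
    rw [← Filter.map_neBot_iff g, Filter.push_pull]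
    exact (inf_comm (𝓝 c) (Filter.map g F1)) ▸ hccl
  set F2 : Filter (G × G) := F1 ⊓ Filter.comap g (𝓝 c) with hF2def
  haveI := hF2ne
  have htg : Tendsto g F2 (𝓝 c) := tendsto_iff_comap.mpr inf_le_right
  have hF2le : F2 ≤ F0 := le_trans inf_le_left inf_le_left
  have htf2 : Tendsto f F2 (𝓝 b) := htf.mono_left inf_le_left
  have hgood2 := hgood.filter_mono hF2le
  have hNtop2 : Tendsto Nf F2 atTop := hNtop.mono_left hF2le
  have htx2 : Tendsto (fun p : G × G => p.1) F2 (𝓝 L.one) := htx.mono_left hF2le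
  have hta2 : Tendsto af F2 (𝓝 L.one) := hta.mono_left hF2le
  -- b ≠ 1
  have htb1 : Tendsto (fun p => L.npow (af p) (Nf p + 1)) F2 (𝓝 b) := by
    have h := tendsto_mul' L (L.pair_one_right b) htf2 hta2
    rw [L.mul_one] at h
    exact h
  have hb1 : b ≠ L.one := by
    intro hbe
    have h1 : ∀ᶠ p in F2, L.npow (af p) (Nf p + 1) ∈ K := htb1.eventually_mem (hbe ▸ hKn)
    have h2 : ∀ᶠ p in F2, L.npow (af p) (Nf p + 1) ∉ K := by
      filter_upwards [hgood2] with p hp; exact hp.2.2.2.1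
    obtain ⟨p, hin, hout⟩ := (h1.and h2).exists
    exact hout hin
  -- c = c⁻¹
  have hrel_half : ∀ᶠ p in F2, L.mul p.1 (g p) = L.mul (L.inv (g p)) p.1 := by
    filter_upwards [hgood2] with p hp
    have h := hp.2.2.2.2.2 (Nf p / 2) (Nat.div_le_self _ _)
    rwa [← hp.2.2.2.2.1 (Nf p / 2) (Nat.div_le_self _ _)] at h
  have ht1 : Tendsto (fun p => L.mul p.1 (g p)) F2 (𝓝 c) := by
    have h := tendsto_mul' L (L.pair_one_left c) htx2 htg
    rwa [L.one_mul] at h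
  have ht2 : Tendsto (fun p => L.mul (L.inv (g p)) p.1) F2 (𝓝 (L.inv c)) := by
    have h := tendsto_mul' L (L.pair_one_right (L.inv c)) ((hinvc.tendsto c).comp htg) htx2
    rwa [L.mul_one] at h
  have hc_inv : c = L.inv c := tendsto_nhds_unique (ht1.congr' hrel_half) ht2
  -- c² = b
  have htcc : Tendsto (fun p => L.mul (g p) (g p)) F2 (𝓝 (L.mul c c)) :=
    tendsto_mul' L (hΩ c (hKU2 hcK) c (hKU2 hcK)) htg htg
  have hev_m1 : ∀ᶠ p in F2, L.npow (af p) (Nf p - 1) = L.mul (f p) (L.inv (af p)) := by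
    filter_upwards [hgood2, hNtop2.eventually_ge_atTop 1] with p hp hp1
    obtain ⟨k, hk⟩ : ∃ k, Nf p = k + 1 := ⟨Nf p - 1, (Nat.succ_pred_eq_of_pos hp1).symm⟩
    have hΩ1 : (L.npow (af p) k, af p) ∈ L.Omega :=
      hΩ _ (hKU2 (hp.2.2.1 k (by omega))) _ (hKU2 hp.1)
    have hΩ2 : (L.npow (af p) (k + 1), L.inv (af p)) ∈ L.Omega :=
      hΩ _ (hKU2 (hp.2.2.1 (k + 1) (by omega))) _ (hsym _ (hKU2 hp.1))
    have h := mul_inv_cancel_right hstd hΩ1 (by exact hΩ2)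
    have hfk : f p = L.npow (af p) (k + 1) := by rw [hfdef]; simp only []; rw [hk]
    rw [hk]
    simp only [Nat.add_sub_cancel]
    rw [hfk]
    exact h.symm
  have hNm1 : Tendsto (fun p => L.npow (af p) (Nf p - 1)) F2 (𝓝 b) := by
    have hOb1 : (b, L.inv L.one) ∈ L.Omega := by
      rw [LocalGroup.inv_one]; exact L.pair_one_right b
    have h := tendsto_mul' L hOb1 htf2 ((hinvc.tendsto L.one).comp hta2)
    rw [LocalGroup.inv_one, L.mul_one] at h
    exact h.congr' (hev_m1.mono fun p hp => hp.symm)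
  have ht2m : Tendsto (fun p => L.npow (af p) (2 * (Nf p / 2))) F2 (𝓝 b) := by
    rw [Filter.tendsto_def]
    intro s hs
    have e1 : ∀ᶠ p in F2, f p ∈ s := htf2.eventually_mem hs
    have e2 : ∀ᶠ p in F2, L.npow (af p) (Nf p - 1) ∈ s := hNm1.eventually_mem hs
    filter_upwards [e1, e2] with p h1 h2
    rcases Nat.even_or_odd (Nf p) with ⟨k, hk⟩ | ⟨k, hk⟩
    · have : 2 * (Nf p / 2) = Nf p := by omega
      show L.npow (af p) (2 * (Nf p / 2)) ∈ s
      rw [this]; exact h1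
    · have : 2 * (Nf p / 2) = Nf p - 1 := by omega
      show L.npow (af p) (2 * (Nf p / 2)) ∈ s
      rw [this]; exact h2
  have hgg : ∀ᶠ p in F2, L.mul (g p) (g p) = L.npow (af p) (2 * (Nf p / 2)) := by
    filter_upwards [hgood2] with p hp
    have ha2 : af p ∈ Un 2 := hKU2 hp.1
    have h := npow_add hstd hΩ hsym ha2 (Nf p / 2) (Nf p / 2)
      (fun j hj => hKU2 (hp.2.2.1 j (by omega)))
    rw [hgdef]
    simp only []
    rw [h]
    congr 1
    omega
  have hccb : L.mul c c = b := tendsto_nhds_unique (htcc.congr' hgg) ht2m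
  have hcone : L.mul c c = L.one := by
    nth_rewrite 2 [hc_inv]
    exact L.mul_inv_self c (lam hstd c)
  exact hb1 (by rw [← hccb, hcone])
end
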